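/- Let V and W be absolute matrix order unit spaces satisfying (T), and let φ : V → W be a completely |·|-preserving linear map with φ(e_V) an order projection in W. Then there is a unique group homomorphism K₀(φ) : K₀(V) → K₀(W) satisfying K₀(φ)([(p, 0)]) = [(φ(p), 0)] for every order projection p ∈ 𝒪𝒫_∞(V). Moreover K₀(id_V) = id_{K₀(V)}, and K₀(ψ ∘ φ) = K₀(ψ) ∘ K₀(φ) for unital completely |·|-preserving maps. -/

import Mathlib

noncomputable section

open scoped Matrix.Norms.L2Operator

/-! ### The *-algebra 𝔉 of ∞×∞ complex matrices with finitely many nonzero entries -/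

/-- `∞ × ∞` complex matrices (indexed by `ℕ × ℕ`). -/
abbrev FMat := ℕ → ℕ → ℂ

/-- The matrix has (at most) finitely many nonzero entries: it is supported in some
`n × n` top-left block. -/
def IsFin (a : FMat) : Prop := ∃ n, ∀ i j, (n ≤ i ∨ n ≤ j) → a i j = 0

/-- Matrix multiplication in `𝔉` (the `tsum` is a finite sum for finitely supported
matrices). -/
def fmul (a b : FMat) : FMat := fun i k => ∑' j, a i j * b j k

/-- The involution (conjugate transpose) on `𝔉`. -/
def fstar (a : FMat) : FMat := fun i j => starRingEnd ℂ (a j i)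

/-- The matrix unit `𝔢_{i,j}`. -/
def eUnit (i j : ℕ) : FMat := fun k l => if k = i ∧ l = j then 1 else 0

/-- `𝔍ₙ = Σ_{i<n} 𝔢_{i,i}`, the partial identities. -/
def JMat (n : ℕ) : FMat := fun k l => if k = l ∧ k < n then 1 else 0

/-- `𝔎ₙ = Σ_{i<n} 𝔢_{i,n+i}`, used for `2×2`-block constructions. -/
def KMat (n : ℕ) : FMat := fun k l => if l = k + n ∧ k < n then 1 else 0

/-- The diagonal idempotent `Σ_{i ∈ s} 𝔢_{i,i}` associated to a finite set `s ⊂ ℕ`. -/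
def finsetDiag (s : Finset ℕ) : FMat := fun k l => if k = l ∧ k ∈ s then 1 else 0

/-- The operator norm on `𝔉`: the supremum of the (C*-algebra) operator norms of the
finite top-left blocks (for a finitely supported matrix the blocks stabilize). -/
def fnorm (a : FMat) : ℝ :=
  ⨆ n : ℕ, ‖(Matrix.of fun i j : Fin n => a i j : Matrix (Fin n) (Fin n) ℂ)‖

/-- The order `o(𝔞)` of a finitely supported matrix: the least `n` such that `𝔞` is
supported in the top-left `n × n` block. -/
def matOrd (a : FMat) : ℕ := sInf {n | ∀ i j, (n ≤ i ∨ n ≤ j) → a i j = 0}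

/-- A local unitary in `𝔉`: `𝔞*𝔞 = 𝔍_{o(𝔞)} = 𝔞𝔞*`. -/
def IsLocalUnitary (a : FMat) : Prop :=
  IsFin a ∧ fmul (fstar a) a = JMat (matOrd a) ∧ fmul a (fstar a) = JMat (matOrd a)

/-! ### Non-degenerate *-𝔉-bimodules -/

/-- A non-degenerate `*`-`𝔉`-bimodule structure on a complex vector space `V`:
left and right actions of (finitely supported) infinite matrices together with an
involution, compatible with each other and with the complex scalars, such that every
element is `𝔍ₙ·v·𝔍ₙ` for some `n`. -/
structure FBimod (V : Type*) [AddCommGroup V] [Module ℂ V] where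
  lsmul : FMat → V → V
  rsmul : V → FMat → V
  star : V → V
  lsmul_add : ∀ a u v, lsmul a (u + v) = lsmul a u + lsmul a v
  rsmul_add : ∀ u v b, rsmul (u + v) b = rsmul u b + rsmul v b
  add_lsmul : ∀ a b v, IsFin a → IsFin b → lsmul (a + b) v = lsmul a v + lsmul b v
  rsmul_add' : ∀ v a b, IsFin a → IsFin b → rsmul v (a + b) = rsmul v a + rsmul v b
  smul_lsmul : ∀ (c : ℂ) a v, IsFin a → lsmul (c • a) v = c • lsmul a v
  smul_rsmul : ∀ (c : ℂ) v a, IsFin a → rsmul v (c • a) = c • rsmul v a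
  mul_lsmul : ∀ a b v, IsFin a → IsFin b → lsmul (fmul a b) v = lsmul a (lsmul b v)
  rsmul_mul : ∀ v a b, IsFin a → IsFin b → rsmul v (fmul a b) = rsmul (rsmul v a) b
  lsmul_rsmul : ∀ a v b, IsFin a → IsFin b → rsmul (lsmul a v) b = lsmul a (rsmul v b)
  star_add : ∀ u v, star (u + v) = star u + star v
  star_star : ∀ v, star (star v) = v
  star_lsmul : ∀ a v, IsFin a → star (lsmul a v) = rsmul (star v) (fstar a)
  star_rsmul : ∀ v a, IsFin a → star (rsmul v a) = lsmul (fstar a) (star v)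
  smul_compat : ∀ (c : ℂ) (n : ℕ) v, lsmul (JMat n) (rsmul v (JMat n)) = v →
    lsmul (c • JMat n) v = c • v
  nondeg : ∀ v, ∃ n, lsmul (JMat n) (rsmul v (JMat n)) = v

namespace FBimod

variable {V : Type*} [AddCommGroup V] [Module ℂ V] (M : FBimod V)

/-- `𝔍ₙ 𝔳 𝔍ₙ`. -/
def cut (n : ℕ) (v : V) : V := M.lsmul (JMat n) (M.rsmul v (JMat n))

/-- The order `o(𝔳)`: the smallest `n` with `𝔍ₙ 𝔳 𝔍ₙ = 𝔳`. -/
def ord (v : V) : ℕ := sInf {n | M.cut n v = v}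

/-- `𝔞* 𝔳 𝔞`. -/
def conj (a : FMat) (v : V) : V := M.lsmul (fstar a) (M.rsmul v a)

/-- `C` is a bimodule cone: consists of self-adjoint elements, is closed under
addition and under `𝔳 ↦ 𝔞*𝔳𝔞` for `𝔞 ∈ 𝔉`. -/
def IsCone (C : Set V) : Prop :=
  (∀ v ∈ C, M.star v = v) ∧ (∀ u ∈ C, ∀ v ∈ C, u + v ∈ C) ∧
    (∀ v ∈ C, ∀ a : FMat, IsFin a → M.conj a v ∈ C)

/-- The cone `C` is proper: `C ∩ (−C) = {0}`. -/
def ConeProper (C : Set V) : Prop := ∀ v ∈ C, -v ∈ C → v = 0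

/-- The cone `C` is Archimedean. -/
def ConeArch (C : Set V) : Prop :=
  ∀ u ∈ C, ∀ v : V, M.star v = v → (∀ k : ℝ, 0 < k → (k : ℂ) • u + v ∈ C) → v ∈ C

/-- The cone `C` is generating. -/
def ConeGen (C : Set V) : Prop :=
  ∀ v : V, ∃ v₀ ∈ C, ∃ v₁ ∈ C, ∃ v₂ ∈ C, ∃ v₃ ∈ C,
    v = v₀ + Complex.I • v₁ - v₂ - Complex.I • v₃

/-- `(𝔳₁, 𝔳₂)ₙ⁺ = 𝔳₁ + 𝔎ₙ* 𝔳₂ 𝔎ₙ` (the diagonal `2×2`-block `diag(𝔳₁,𝔳₂)`). -/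
def pairPlus (n : ℕ) (v₁ v₂ : V) : V :=
  v₁ + M.lsmul (fstar (KMat n)) (M.rsmul v₂ (KMat n))

/-- `saₙ(𝔳) = 𝔍ₙ 𝔳 𝔎ₙ + 𝔎ₙ* 𝔳* 𝔍ₙ` (the off-diagonal `2×2`-block of `𝔳`). -/
def san (n : ℕ) (v : V) : V :=
  M.lsmul (JMat n) (M.rsmul v (KMat n)) +
    M.lsmul (fstar (KMat n)) (M.rsmul (M.star v) (JMat n))

/-- `𝔲` and `𝔳` are `𝔉`-independent: compressed onto disjoint diagonal blocks. -/
def FIndep (u v : V) : Prop :=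
  ∃ I J : Finset ℕ, Disjoint I J ∧
    M.lsmul (finsetDiag I) (M.rsmul u (finsetDiag I)) = u ∧
    M.lsmul (finsetDiag J) (M.rsmul v (finsetDiag J)) = v

/-- `(𝔙, C, abs)` is a non-degenerate absolutely ordered `𝔉`-bimodule
(Definition 18 of the paper). -/
structure IsAbsOrd (C : Set V) (abs : V → V) : Prop where
  cone : M.IsCone C
  abs_mem : ∀ v, abs v ∈ C
  ord_abs_le : ∀ v, M.ord (abs v) ≤ M.ord v
  abs_of_mem : ∀ v ∈ C, abs v = v
  pos_part : ∀ v, M.pairPlus (M.ord v) (abs (M.star v)) (abs v) + M.san (M.ord v) v ∈ C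
  abs_smul_le : ∀ (a b : FMat), IsFin a → IsFin b → ∀ v,
    (fnorm a : ℂ) • abs (M.rsmul (abs v) b) - abs (M.lsmul a (M.rsmul v b)) ∈ C
  indep_add : ∀ u v, M.FIndep u v → abs (u + v) = abs u + abs v
  absorb : ∀ u ∈ C, ∀ v ∈ C, ∀ w ∈ C, abs (u - v) = u + v → v - w ∈ C →
    abs (u - w) = u + w
  ortho_pm : ∀ u ∈ C, ∀ v ∈ C, ∀ w ∈ C, abs (u - v) = u + v → abs (u - w) = u + w →
    abs (u - abs (v + w)) = u + abs (v + w) ∧ abs (u - abs (v - w)) = u + abs (v - w)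

/-- `eⁿ = Σ_{i<n} 𝔢_{i,0} 𝔢 𝔢_{0,i}` for an element `𝔢` of order `1`. -/
def epow (e : V) (n : ℕ) : V :=
  ∑ i ∈ Finset.range n, M.lsmul (eUnit i 0) (M.rsmul e (eUnit 0 i))

/-- `𝔢` is a local order unit for `(𝔙, C)`. -/
def IsLocalOrderUnit (C : Set V) (e : V) : Prop :=
  e ∈ C ∧ M.cut 1 e = e ∧ ∀ v : V, M.cut 1 v = v → ∃ k : ℝ, 0 < k ∧
    M.pairPlus 1 ((k : ℂ) • e) ((k : ℂ) • e) + M.san 1 v ∈ C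

/-- `(𝔙, C, 𝔢)` is a local `𝔉`-order unit bimodule. -/
def IsLocalUnitBimod (C : Set V) (e : V) : Prop :=
  M.IsCone C ∧ ConeProper C ∧ M.ConeArch C ∧ M.IsLocalOrderUnit C e

/-- The norm associated to a local order unit:
`‖𝔳‖ = inf { k > 0 : (k𝔢^{o(𝔳)}, k𝔢^{o(𝔳)})⁺_{o(𝔳)} + sa_{o(𝔳)}(𝔳) ∈ C }`. -/
def lnorm (C : Set V) (e : V) (v : V) : ℝ :=
  sInf {k : ℝ | 0 < k ∧
    M.pairPlus (M.ord v) ((k : ℂ) • M.epow e (M.ord v)) ((k : ℂ) • M.epow e (M.ord v)) +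
      M.san (M.ord v) v ∈ C}

/-- `𝔲 ⊥_∞ 𝔳` with respect to the local-order-unit norm. -/
def PerpInf (C : Set V) (e : V) (u v : V) : Prop :=
  ∀ k₁ k₂ : ℝ, M.lnorm C e ((k₁ : ℂ) • u + (k₂ : ℂ) • v) =
    max (M.lnorm C e ((k₁ : ℂ) • u)) (M.lnorm C e ((k₂ : ℂ) • v))

end FBimod
/-! ### Matrices over a complex *-vector space -/

section MatrixLevel

variable {V : Type*} [AddCommGroup V] [Module ℂ V] [StarAddMonoid V] [StarModule ℂ V]

/-- Conjugate transpose of a rectangular matrix over a `*`-vector space. -/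
def mstar {m n : ℕ} (v : Matrix (Fin m) (Fin n) V) : Matrix (Fin n) (Fin m) V :=
  fun i j => star (v j i)

/-- Left action of a scalar matrix: `(a v)_{ij} = Σ_k a_{ik} v_{kj}`. -/
def aSmul {r m n : ℕ} (a : Matrix (Fin r) (Fin m) ℂ) (v : Matrix (Fin m) (Fin n) V) :
    Matrix (Fin r) (Fin n) V :=
  fun i j => ∑ k, a i k • v k j

/-- Right action of a scalar matrix: `(v b)_{ij} = Σ_k b_{kj} • v_{ik}`. -/
def smulB {m n s : ℕ} (v : Matrix (Fin m) (Fin n) V) (b : Matrix (Fin n) (Fin s) ℂ) :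
    Matrix (Fin m) (Fin s) V :=
  fun i j => ∑ k, b k j • v i k

/-- Direct sum (block diagonal) of rectangular matrices over `V`. -/
def dsum {m n r s : ℕ} (v : Matrix (Fin m) (Fin n) V) (w : Matrix (Fin r) (Fin s) V) :
    Matrix (Fin (m + r)) (Fin (n + s)) V :=
  fun i j =>
    if hi : (i : ℕ) < m then
      (if hj : (j : ℕ) < n then v ⟨i, hi⟩ ⟨j, hj⟩ else 0)
    else
      (if hj : (j : ℕ) < n then 0
       else w ⟨(i : ℕ) - m, by have := i.isLt; omega⟩ ⟨(j : ℕ) - n, by have := j.isLt; omega⟩)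

end MatrixLevel

/-- The L2-operator norm of a rectangular complex scalar matrix. -/
def cnorm {r m : ℕ} (a : Matrix (Fin r) (Fin m) ℂ) : ℝ := ‖a‖

/-- Embedding of a finite rectangular complex matrix into `𝔉`. -/
def embC {r m : ℕ} (a : Matrix (Fin r) (Fin m) ℂ) : FMat :=
  fun i j => if hi : i < r then (if hj : j < m then a ⟨i, hi⟩ ⟨j, hj⟩ else 0) else 0

/-- `e ⊕ ⋯ ⊕ e`: the diagonal matrix with constant diagonal `e`. -/
def diagE {V : Type*} [AddCommGroup V] (e : V) (n : ℕ) : Matrix (Fin n) (Fin n) V :=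
  Matrix.of fun i j => if i = j then e else 0

/-! ### Absolutely matrix ordered spaces and absolute matrix order unit spaces -/

/-- An absolutely matrix ordered space structure on a complex `*`-vector space `V`:
matrix cones `Mₙ(V)⁺` and absolute values `|·|_{m,n} : M_{m,n}(V) → Mₙ(V)⁺`
(Definition 4.1 of Karn-Kumar). -/
structure AMOS (V : Type*) [AddCommGroup V] [Module ℂ V] [StarAddMonoid V]
    [StarModule ℂ V] where
  pos : ∀ n : ℕ, Set (Matrix (Fin n) (Fin n) V)
  abs : ∀ m n : ℕ, Matrix (Fin m) (Fin n) V → Matrix (Fin n) (Fin n) V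
  pos_star : ∀ n, ∀ v ∈ pos n, mstar v = v
  pos_add : ∀ n, ∀ u ∈ pos n, ∀ v ∈ pos n, u + v ∈ pos n
  pos_conj : ∀ m n (a : Matrix (Fin n) (Fin m) ℂ), ∀ v ∈ pos n,
    aSmul a.conjTranspose (smulB v a) ∈ pos m
  abs_mem : ∀ m n v, abs m n v ∈ pos n
  abs_of_pos : ∀ n, ∀ v ∈ pos n, abs n n v = v
  abs_add_self : ∀ n (v : Matrix (Fin n) (Fin n) V), mstar v = v →
    abs n n v + v ∈ pos n ∧ abs n n v - v ∈ pos n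
  abs_real_smul : ∀ n (k : ℝ) (v : Matrix (Fin n) (Fin n) V), mstar v = v →
    abs n n ((k : ℂ) • v) = ((|k| : ℝ) : ℂ) • abs n n v
  absorb : ∀ n, ∀ u ∈ pos n, ∀ v ∈ pos n, ∀ w ∈ pos n,
    abs n n (u - v) = u + v → v - w ∈ pos n → abs n n (u - w) = u + w
  ortho_pm : ∀ n, ∀ u ∈ pos n, ∀ v ∈ pos n, ∀ w ∈ pos n,
    abs n n (u - v) = u + v → abs n n (u - w) = u + w →
    abs n n (u - abs n n (v + w)) = u + abs n n (v + w) ∧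
      abs n n (u - abs n n (v - w)) = u + abs n n (v - w)
  abs_smul_le : ∀ (r m n s : ℕ) (α : Matrix (Fin r) (Fin m) ℂ)
    (v : Matrix (Fin m) (Fin n) V) (β : Matrix (Fin n) (Fin s) ℂ),
    (cnorm α : ℂ) • abs n s (smulB (abs m n v) β) - abs r s (aSmul α (smulB v β)) ∈ pos s
  abs_dsum : ∀ (m n r s : ℕ) (v : Matrix (Fin m) (Fin n) V) (w : Matrix (Fin r) (Fin s) V),
    abs (m + r) (n + s) (dsum v w) = dsum (abs m n v) (abs r s w)

/-- A matrix order unit structure on top of an absolutely matrix ordered space: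
an order unit `e` with `V⁺` proper and each `Mₙ(V)⁺` Archimedean. -/
structure AMOUS (V : Type*) [AddCommGroup V] [Module ℂ V] [StarAddMonoid V]
    [StarModule ℂ V] extends AMOS V where
  e : V
  e_pos : diagE e 1 ∈ pos 1
  proper : ∀ v ∈ pos 1, -v ∈ pos 1 → v = 0
  arch : ∀ n (v : Matrix (Fin n) (Fin n) V), mstar v = v →
    (∀ k : ℝ, 0 < k → (k : ℂ) • diagE e n + v ∈ pos n) →
    v ∈ pos n
  unit : ∀ n (v : Matrix (Fin n) (Fin n) V), mstar v = v →
    ∃ k : ℝ, 0 < k ∧ (k : ℂ) • diagE e n - v ∈ pos n ∧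
      (k : ℂ) • diagE e n + v ∈ pos n

namespace AMOUS

variable {V : Type*} [AddCommGroup V] [Module ℂ V] [StarAddMonoid V] [StarModule ℂ V]
variable (A : AMOUS V)

/-- `eⁿ = e ⊕ ⋯ ⊕ e ∈ Mₙ(V)`. -/
def eN (n : ℕ) : Matrix (Fin n) (Fin n) V := diagE A.e n

/-- The `2n × 2n` matrix `[[a, b], [c, d]]` of `n × n` blocks. -/
def block2 {n : ℕ} (a b c d : Matrix (Fin n) (Fin n) V) :
    Matrix (Fin (n + n)) (Fin (n + n)) V :=
  fun i j =>
    if hi : (i : ℕ) < n then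
      (if hj : (j : ℕ) < n then a ⟨i, hi⟩ ⟨j, hj⟩
       else b ⟨i, hi⟩ ⟨(j : ℕ) - n, by have := j.isLt; omega⟩)
    else
      (if hj : (j : ℕ) < n then c ⟨(i : ℕ) - n, by have := i.isLt; omega⟩ ⟨j, hj⟩
       else d ⟨(i : ℕ) - n, by have := i.isLt; omega⟩ ⟨(j : ℕ) - n, by have := j.isLt; omega⟩)

end AMOUS
namespace AMOUS

variable {V : Type*} [AddCommGroup V] [Module ℂ V] [StarAddMonoid V] [StarModule ℂ V]
variable (A : AMOUS V)

/-- The matrix norms of a matrix order unit space: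
`‖v‖ₙ = inf { k > 0 : [[k eⁿ, v], [v*, k eⁿ]] ∈ M₂ₙ(V)⁺ }`. -/
def mnorm (n : ℕ) (v : Matrix (Fin n) (Fin n) V) : ℝ :=
  sInf {k : ℝ | 0 < k ∧
    block2 ((k : ℂ) • A.eN n) v (mstar v) ((k : ℂ) • A.eN n) ∈ A.pos (n + n)}

/-- Orthogonality `u ⊥ v` (for positive elements): `|u − v| = u + v`. -/
def Perp {n : ℕ} (u v : Matrix (Fin n) (Fin n) V) : Prop :=
  A.abs n n (u - v) = u + v

/-- `u ⊥_∞ v`: `‖k₁ u + k₂ v‖ = max {‖k₁ u‖, ‖k₂ v‖}` for all real `k₁, k₂`. -/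
def PerpInfM {n : ℕ} (u v : Matrix (Fin n) (Fin n) V) : Prop :=
  ∀ k₁ k₂ : ℝ, A.mnorm n ((k₁ : ℂ) • u + (k₂ : ℂ) • v) =
    max (A.mnorm n ((k₁ : ℂ) • u)) (A.mnorm n ((k₂ : ℂ) • v))

/-- `u ⊥_∞^a v`: absolute `∞`-orthogonality. -/
def PerpInfA {n : ℕ} (u v : Matrix (Fin n) (Fin n) V) : Prop :=
  ∀ u₁ ∈ A.pos n, ∀ v₁ ∈ A.pos n, u - u₁ ∈ A.pos n → v - v₁ ∈ A.pos n → A.PerpInfM u₁ v₁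

/-- `(V, {Mₙ(V)⁺}, {|·|}, e)` is an absolute matrix order unit space:
`⊥ = ⊥_∞^a` on each `Mₙ(V)⁺`. -/
def IsAbsolute : Prop :=
  ∀ n, ∀ u ∈ A.pos n, ∀ v ∈ A.pos n, (A.Perp u v ↔ A.PerpInfA u v)

/-- `p` is an order projection in `Mₙ(V)`: `p* = p` and `|2p − eⁿ| = eⁿ`. -/
def IsOP (n : ℕ) (p : Matrix (Fin n) (Fin n) V) : Prop :=
  mstar p = p ∧ A.abs n n ((2 : ℂ) • p - A.eN n) = A.eN n

/-- `v ∈ M_{m,n}(V)` is a partial isometry: `|v|` and `|v*|` are order projections. -/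
def IsPI {m n : ℕ} (v : Matrix (Fin m) (Fin n) V) : Prop :=
  A.IsOP n (A.abs m n v) ∧ A.IsOP m (A.abs n m (mstar v))

end AMOUS

/-- An element of `M_∞(V)`: a matrix at some level `n`. -/
def OPE (V : Type*) : Type _ := Σ n : ℕ, Matrix (Fin n) (Fin n) V

namespace OPE

variable {V : Type*} [AddCommGroup V] [Module ℂ V] [StarAddMonoid V] [StarModule ℂ V]

/-- Direct sum in `M_∞(V)`. -/
def d (p q : OPE V) : OPE V := ⟨p.1 + q.1, dsum p.2 q.2⟩

/-- The zero order projection (at level 1). -/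
def zero (V : Type*) [AddCommGroup V] : OPE V := ⟨1, 0⟩

end OPE

namespace AMOUS

variable {V : Type*} [AddCommGroup V] [Module ℂ V] [StarAddMonoid V] [StarModule ℂ V]
variable (A : AMOUS V)

/-- Membership in `𝒪𝒫_∞(V)`. -/
def IsOPE (p : OPE V) : Prop := A.IsOP p.1 p.2

/-- `eⁿ` as an element of `𝒪𝒫_∞(V)`. -/
def eOPE (n : ℕ) : OPE V := ⟨n, A.eN n⟩

/-- Partial isometric equivalence `p ∼ q` of order projections: there is a partial
isometry `v` with `p = |v*|` and `q = |v|`. -/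
def Sim (p q : OPE V) : Prop :=
  ∃ v : Matrix (Fin p.1) (Fin q.1) V,
    A.IsPI v ∧ p.2 = A.abs q.1 p.1 (mstar v) ∧ q.2 = A.abs p.1 q.1 v

/-- Condition (T). -/
def CondT : Prop :=
  ∀ (m n l : ℕ) (u : Matrix (Fin m) (Fin n) V) (v : Matrix (Fin l) (Fin n) V),
    A.IsPI u → A.IsPI v → A.abs m n u = A.abs l n v →
    ∃ w : Matrix (Fin m) (Fin l) V, A.IsPI w ∧
      A.abs l m (mstar w) = A.abs n m (mstar u) ∧ A.abs m l w = A.abs n l (mstar v)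

/-- Stabilized equivalence `p ≈ q`: `p ⊕ r ∼ q ⊕ r` for some order projection `r`. -/
def ASim (p q : OPE V) : Prop := ∃ r : OPE V, A.IsOPE r ∧ A.Sim (p.d r) (q.d r)

/-- A pair of order projections, representing an element `[(p,q)]` of `K₀(V)`. -/
def IsOPPair (x : OPE V × OPE V) : Prop := A.IsOPE x.1 ∧ A.IsOPE x.2

/-- The relation `(p₁,q₁) ≡ (p₂,q₂) ↔ p₁ ⊕ q₂ ≈ p₂ ⊕ q₁` defining `K₀(V)`. -/
def Krel (x y : OPE V × OPE V) : Prop := A.ASim (x.1.d y.2) (y.1.d x.2)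

/-- Addition of representatives of `K₀(V)` classes. -/
def kadd (x y : OPE V × OPE V) : OPE V × OPE V := (x.1.d y.1, x.2.d y.2)

/-- The representative of the zero class of `K₀(V)`. -/
def kzero : OPE V × OPE V := (OPE.zero V, OPE.zero V)

/-- Representative-level membership in the cone `K₀(V)⁺ = {[(p,0)] : p ∈ 𝒪𝒫_∞(V)}`. -/
def KPos (x : OPE V × OPE V) : Prop :=
  ∃ p : OPE V, A.IsOPE p ∧ A.Krel x (p, OPE.zero V)

/-- Representative-level order `[x] ≤ [y]` in `K₀(V)`: `[y] − [x] ∈ K₀(V)⁺`. -/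
def Kle (x y : OPE V × OPE V) : Prop :=
  ∃ r : OPE V, A.IsOPE r ∧ A.Krel (kadd x (r, OPE.zero V)) y

/-- The order projection `p ∈ Mₙ(V)` is finite: `q ∼ p` and `q ≥ p` imply `q = p`. -/
def FiniteOP (n : ℕ) (p : Matrix (Fin n) (Fin n) V) : Prop :=
  ∀ q : Matrix (Fin n) (Fin n) V, A.IsOP n q → A.Sim ⟨n, q⟩ ⟨n, p⟩ →
    q - p ∈ A.pos n → q = p

end AMOUS

/-! ### Maps between absolute matrix order unit spaces -/

section Maps

variable {V W : Type*} [AddCommGroup V] [Module ℂ V] [StarAddMonoid V] [StarModule ℂ V]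
  [AddCommGroup W] [Module ℂ W] [StarAddMonoid W] [StarModule ℂ W]

/-- The amplification `φₙ` (entrywise application) of a map. -/
def mmap (φ : V →ₗ[ℂ] W) {m n : ℕ} (v : Matrix (Fin m) (Fin n) V) :
    Matrix (Fin m) (Fin n) W :=
  fun i j => φ (v i j)

/-- `φ` is completely `|·|`-preserving: every amplification `φₙ` is `|·|`-preserving. -/
def CAbsPres (A : AMOUS V) (B : AMOUS W) (φ : V →ₗ[ℂ] W) : Prop :=
  ∀ (n : ℕ) (v : Matrix (Fin n) (Fin n) V), B.abs n n (mmap φ v) = mmap φ (A.abs n n v)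

/-- `φ` and `ψ` are completely orthogonal: `φₙ(u) ⊥ ψₙ(v)` for all positive `u, v`. -/
def COrth (A : AMOUS V) (B : AMOUS W) (φ ψ : V →ₗ[ℂ] W) : Prop :=
  ∀ (n : ℕ) (u v : Matrix (Fin n) (Fin n) V), u ∈ A.pos n → v ∈ A.pos n →
    B.Perp (mmap φ u) (mmap ψ v)

/-- The image of an element of `M_∞(V)` under (the amplifications of) `φ`. -/
def mmapOPE (φ : V →ₗ[ℂ] W) (p : OPE V) : OPE W := ⟨p.1, mmap φ p.2⟩

/-- `F` represents a group homomorphism `K₀(V) → K₀(W)` making the `K₀` diagram of `φ`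
commute: it maps `K₀`-representatives to `K₀`-representatives, respects the defining
relation `≡`, is additive, and satisfies `F([(p, 0)]) = [(φ(p), 0)]`. -/
def K0HomProp (A : AMOUS V) (B : AMOUS W) (φ : V →ₗ[ℂ] W)
    (F : OPE V × OPE V → OPE W × OPE W) : Prop :=
  (∀ x, A.IsOPPair x → B.IsOPPair (F x)) ∧
  (∀ x y, A.IsOPPair x → A.IsOPPair y → A.Krel x y → B.Krel (F x) (F y)) ∧
  (∀ x y, A.IsOPPair x → A.IsOPPair y → B.Krel (F (AMOUS.kadd x y)) (AMOUS.kadd (F x) (F y))) ∧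
  (∀ p : OPE V, A.IsOPE p → B.Krel (F (p, OPE.zero V)) (mmapOPE φ p, OPE.zero W))

/-- The completely bounded norm of `φ` with respect to the order unit matrix norms. -/
def cbNorm (A : AMOUS V) (B : AMOUS W) (φ : V →ₗ[ℂ] W) : ℝ :=
  ⨆ n : ℕ, sInf {c : ℝ | 0 ≤ c ∧
    ∀ v : Matrix (Fin n) (Fin n) V, B.mnorm n (mmap φ v) ≤ c * A.mnorm n v}

end Maps



set_option linter.unusedSectionVars false

section MatAlg

variable {V : Type*} [AddCommGroup V] [Module ℂ V] [StarAddMonoid V] [StarModule ℂ V]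

lemma smulB_one {m n : ℕ} (v : Matrix (Fin m) (Fin n) V) :
    smulB v (1 : Matrix (Fin n) (Fin n) ℂ) = v := by
  funext i j
  simp [smulB, Matrix.one_apply]

lemma aSmul_one {m n : ℕ} (v : Matrix (Fin m) (Fin n) V) :
    aSmul (1 : Matrix (Fin m) (Fin m) ℂ) v = v := by
  funext i j
  simp [aSmul, Matrix.one_apply]

lemma aSmul_aSmul {r m l n : ℕ} (a : Matrix (Fin r) (Fin m) ℂ) (b : Matrix (Fin m) (Fin l) ℂ)
    (v : Matrix (Fin l) (Fin n) V) :
    aSmul a (aSmul b v) = aSmul (a * b) v := by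
  funext i j
  simp only [aSmul, Matrix.mul_apply, Finset.smul_sum, Finset.sum_smul, smul_smul]
  rw [Finset.sum_comm]

lemma aSmul_zero_left {r m n : ℕ} (v : Matrix (Fin m) (Fin n) V) :
    aSmul (0 : Matrix (Fin r) (Fin m) ℂ) v = 0 := by
  funext i j
  simp only [aSmul, Matrix.zero_apply, zero_smul, Finset.sum_const_zero]

lemma mstar_mstar {m n : ℕ} (v : Matrix (Fin m) (Fin n) V) : mstar (mstar v) = v := by
  funext i j; simp [mstar]

lemma mstar_aSmul {r m n : ℕ} (a : Matrix (Fin r) (Fin m) ℂ) (v : Matrix (Fin m) (Fin n) V) :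
    mstar (aSmul a v) = smulB (mstar v) a.conjTranspose := by
  funext i j
  simp [mstar, aSmul, smulB, star_sum, star_smul, Matrix.conjTranspose_apply]

lemma mstar_dsum {m n r s : ℕ} (v : Matrix (Fin m) (Fin n) V) (w : Matrix (Fin r) (Fin s) V) :
    mstar (dsum v w) = dsum (mstar v) (mstar w) := by
  funext i j
  simp only [mstar, dsum]
  split_ifs <;> simp

lemma dsum_add {m n r s : ℕ} (v v' : Matrix (Fin m) (Fin n) V) (w w' : Matrix (Fin r) (Fin s) V) :
    dsum (v + v') (w + w') = dsum v w + dsum v' w' := by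
  funext i j
  simp only [dsum, Matrix.add_apply]
  split_ifs <;> simp

lemma dsum_sub {m n r s : ℕ} (v v' : Matrix (Fin m) (Fin n) V) (w w' : Matrix (Fin r) (Fin s) V) :
    dsum (v - v') (w - w') = dsum v w - dsum v' w' := by
  funext i j
  simp only [dsum, Matrix.sub_apply]
  split_ifs <;> simp

lemma dsum_smul {m n r s : ℕ} (c : ℂ) (v : Matrix (Fin m) (Fin n) V) (w : Matrix (Fin r) (Fin s) V) :
    dsum (c • v) (c • w) = c • dsum v w := by
  funext i j
  simp only [dsum, Matrix.smul_apply]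
  split_ifs <;> simp

lemma dsum_left_inj {m n r s : ℕ} {v v' : Matrix (Fin m) (Fin n) V}
    {w w' : Matrix (Fin r) (Fin s) V} (h : dsum v w = dsum v' w') : v = v' := by
  funext i j
  have := congrFun (congrFun h ⟨i, by omega⟩) ⟨j, by omega⟩
  simpa [dsum, i.isLt, j.isLt] using this

lemma diagE_dsum (e : V) (m n : ℕ) : (diagE e (m + n) : Matrix (Fin (m+n)) (Fin (m+n)) V)
    = dsum (diagE e m) (diagE e n) := by
  funext i j
  simp only [diagE, dsum, Matrix.of_apply]
  split_ifs with h1 h2 h3 h4 h5 h6 h7 <;>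
    first
      | rfl
      | (exfalso; omega)
      | (exfalso; apply h1; exact Fin.ext (by simp only [Fin.ext_iff] at *; omega))
      | (exfalso; simp only [Fin.ext_iff] at *; omega)

end MatAlg

set_option linter.unusedSectionVars false

section ConeLemmas

variable {V : Type*} [AddCommGroup V] [Module ℂ V] [StarAddMonoid V] [StarModule ℂ V]

lemma cnorm_nonneg {m n : ℕ} (a : Matrix (Fin m) (Fin n) ℂ) : 0 ≤ cnorm a :=
  norm_nonneg _

lemma cnorm_one_le (n : ℕ) : cnorm (1 : Matrix (Fin n) (Fin n) ℂ) ≤ 1 := by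
  have h := Matrix.l2_opNorm_conjTranspose_mul_self (1 : Matrix (Fin n) (Fin n) ℂ)
  rw [Matrix.conjTranspose_one, one_mul] at h
  have h0 : (0:ℝ) ≤ ‖(1 : Matrix (Fin n) (Fin n) ℂ)‖ := norm_nonneg _
  show ‖(1 : Matrix (Fin n) (Fin n) ℂ)‖ ≤ 1
  nlinarith

lemma cnorm_le_one {m n : ℕ} (γ : Matrix (Fin m) (Fin n) ℂ)
    (h : γ.conjTranspose * γ = 1) : cnorm γ ≤ 1 := by
  have hm := Matrix.l2_opNorm_conjTranspose_mul_self γ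
  rw [h] at hm
  have h1 : ‖(1 : Matrix (Fin n) (Fin n) ℂ)‖ ≤ 1 := cnorm_one_le n
  have h0 : (0:ℝ) ≤ ‖γ‖ := norm_nonneg _
  show ‖γ‖ ≤ 1
  nlinarith [hm, h1, h0]

lemma smulB_smul_one {m n : ℕ} (c : ℂ) (v : Matrix (Fin m) (Fin n) V) :
    smulB v (c • (1 : Matrix (Fin n) (Fin n) ℂ)) = c • v := by
  funext i j
  simp [smulB, Matrix.one_apply, smul_ite, ite_smul]

lemma aSmul_smul_one {m n : ℕ} (c : ℂ) (v : Matrix (Fin m) (Fin n) V) :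
    aSmul (c • (1 : Matrix (Fin m) (Fin m) ℂ)) v = c • v := by
  funext i j
  simp [aSmul, Matrix.one_apply, smul_ite, ite_smul, smul_smul]

lemma smulB_neg {m n s : ℕ} (v : Matrix (Fin m) (Fin n) V) (b : Matrix (Fin n) (Fin s) ℂ) :
    smulB (-v) b = -(smulB v b) := by
  funext i j
  simp [smulB]

lemma aSmul_neg {r m n : ℕ} (a : Matrix (Fin r) (Fin m) ℂ) (v : Matrix (Fin m) (Fin n) V) :
    aSmul a (-v) = -(aSmul a v) := by
  funext i j
  simp [aSmul]

variable (A : AMOUS V)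

lemma pos_smul_real {n : ℕ} {x : Matrix (Fin n) (Fin n) V} (c : ℝ) (hc : 0 ≤ c)
    (hx : x ∈ A.pos n) : (c : ℂ) • x ∈ A.pos n := by
  have h := A.pos_conj n n ((Real.sqrt c : ℂ) • (1 : Matrix (Fin n) (Fin n) ℂ)) x hx
  have e1 : smulB x ((Real.sqrt c : ℂ) • (1 : Matrix (Fin n) (Fin n) ℂ))
      = (Real.sqrt c : ℂ) • x := smulB_smul_one _ _
  have e2 : ((Real.sqrt c : ℂ) • (1 : Matrix (Fin n) (Fin n) ℂ)).conjTranspose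
      = (Real.sqrt c : ℂ) • (1 : Matrix (Fin n) (Fin n) ℂ) := by
    rw [Matrix.conjTranspose_smul, Matrix.conjTranspose_one]
    norm_num
  rw [e1, e2] at h
  have e3 : aSmul ((Real.sqrt c : ℂ) • (1 : Matrix (Fin n) (Fin n) ℂ))
      ((Real.sqrt c : ℂ) • x) = ((Real.sqrt c : ℂ) * (Real.sqrt c : ℂ)) • x := by
    rw [aSmul_smul_one, smul_smul]
  rw [e3] at h
  have e4 : ((Real.sqrt c : ℂ) * (Real.sqrt c : ℂ)) = (c : ℂ) := by
    rw [← Complex.ofReal_mul, Real.mul_self_sqrt hc]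
  rwa [e4] at h

lemma pos_zero (n : ℕ) : (0 : Matrix (Fin n) (Fin n) V) ∈ A.pos n := by
  have h := pos_smul_real A 0 le_rfl (A.abs_mem n n 0)
  simpa using h

lemma pos_half {n : ℕ} {x : Matrix (Fin n) (Fin n) V} (h : (2:ℂ) • x ∈ A.pos n) :
    x ∈ A.pos n := by
  have h2 := pos_smul_real A (1/2) (by norm_num) h
  rw [smul_smul] at h2
  norm_num at h2
  exact h2

lemma pos_smul_mono {n : ℕ} {x : Matrix (Fin n) (Fin n) V} {k k' : ℝ} (hk : k ≤ k')
    (hx : x ∈ A.pos n) : (k' : ℂ) • x - (k : ℂ) • x ∈ A.pos n := by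
  have : (k' : ℂ) • x - (k : ℂ) • x = ((k' - k : ℝ) : ℂ) • x := by
    push_cast
    rw [sub_smul]
  rw [this]
  exact pos_smul_real A _ (by linarith) hx

/-- Properness of the cones at every matrix level, via polarization. -/
lemma proper_n {n : ℕ} {x : Matrix (Fin n) (Fin n) V} (hx : x ∈ A.pos n)
    (hx' : -x ∈ A.pos n) : x = 0 := by
  have key : ∀ a : Matrix (Fin n) (Fin 1) ℂ,
      aSmul a.conjTranspose (smulB x a) = 0 := by
    intro a
    have h1 := A.pos_conj 1 n a x hx
    have h2 := A.pos_conj 1 n a (-x) hx'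
    rw [smulB_neg, aSmul_neg] at h2
    exact A.proper _ h1 h2
  -- evaluate the (0,0) entry for well chosen vectors
  have entry : ∀ a : Matrix (Fin n) (Fin 1) ℂ,
      (∑ k : Fin n, (star (a k 0)) • (∑ l : Fin n, a l 0 • x k l)) = 0 := by
    intro a
    have h := congrFun (congrFun (key a) 0) 0
    simpa [aSmul, smulB, Matrix.conjTranspose_apply] using h
  -- single basis vectors give vanishing diagonal
  have diag : ∀ i : Fin n, x i i = 0 := by
    intro i
    have h := entry (fun k _ => if k = i then 1 else 0)
    simpa [apply_ite (star : ℂ → ℂ), star_one, star_zero, ite_smul, zero_smul, one_smul,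
      Finset.sum_ite_eq'] using h
  -- pairs give vanishing off-diagonal
  have offd : ∀ (i j : Fin n) (c : ℂ), i ≠ j →
      c • x i j + (star c) • x j i = 0 := by
    intro i j c hij
    have h := entry (fun k _ => (if k = i then 1 else 0) + (if k = j then c else 0))
    have inner : ∀ k : Fin n,
        (∑ l : Fin n, ((if l = i then (1:ℂ) else 0) + (if l = j then c else 0)) • x k l)
          = x k i + c • x k j := by
      intro k
      simp [add_smul, Finset.sum_add_distrib, ite_smul, Finset.sum_ite_eq']
    simp only [inner] at h
    rw [Finset.sum_eq_add_of_mem i j (Finset.mem_univ i) (Finset.mem_univ j) hij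
      (by intro k _ hk; simp [hk.1, hk.2, Ne.symm hij])] at h
    · simp only [if_pos rfl, if_neg hij, if_neg (Ne.symm hij), add_zero, zero_add,
        star_add, star_one, star_zero] at h
      rw [diag i, diag j] at h
      simpa [one_smul, smul_add, smul_smul] using h
  funext i j
  by_cases hij : i = j
  · subst hij; exact diag i
  · have h1 := offd i j 1 hij
    have hI := offd i j Complex.I hij
    simp only [one_smul, star_one] at h1
    have hIc : star Complex.I = -Complex.I := by
      simp [Complex.star_def, Complex.conj_I]
    rw [hIc] at hI
    -- from I•xij - I•xji = 0 deduce xij = xji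
    have h2 : x i j = x j i := by
      have : Complex.I • (x i j - x j i) = 0 := by
        rw [smul_sub, sub_eq_add_neg]
        simpa [neg_smul] using hI
      have h3 := congrArg (fun y => (-Complex.I) • y) this
      simp only [smul_smul, smul_zero] at h3
      rw [show -Complex.I * Complex.I = 1 by simp [Complex.I_mul_I], one_smul] at h3
      exact sub_eq_zero.mp h3
    rw [h2] at h1
    have h4 : (2:ℂ) • x j i = 0 := by rw [two_smul]; exact h1
    have h5 := congrArg (fun y => ((2:ℂ)⁻¹) • y) h4
    simp only [smul_smul, smul_zero] at h5
    norm_num at h5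
    rw [h2]
    exact h5

lemma abs_abs' {m n : ℕ} (v : Matrix (Fin m) (Fin n) V) :
    A.abs n n (A.abs m n v) = A.abs m n v :=
  A.abs_of_pos n _ (A.abs_mem m n v)

lemma abs_neg' {n : ℕ} {x : Matrix (Fin n) (Fin n) V} (hx : mstar x = x) :
    A.abs n n (-x) = A.abs n n x := by
  have h := A.abs_real_smul n (-1) x hx
  have e1 : (((-1:ℝ)) : ℂ) • x = -x := by push_cast; simp
  have e2 : ((|(-1:ℝ)| : ℝ) : ℂ) = 1 := by norm_num
  rw [e1, e2, one_smul] at h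
  exact h

lemma abs_zero_rect (m n : ℕ) :
    A.abs m n (0 : Matrix (Fin m) (Fin n) V) = 0 := by
  have h := A.abs_smul_le m m n n (0 : Matrix (Fin m) (Fin m) ℂ) 0 (1 : Matrix (Fin n) (Fin n) ℂ)
  rw [smulB_one, smulB_one] at h
  have e0 : aSmul (0 : Matrix (Fin m) (Fin m) ℂ) (0 : Matrix (Fin m) (Fin n) V) = 0 :=
    aSmul_zero_left _
  rw [e0] at h
  have ec : cnorm (0 : Matrix (Fin m) (Fin m) ℂ) = 0 := norm_zero
  rw [ec] at h
  simp only [Complex.ofReal_zero, zero_smul, zero_sub] at h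
  exact proper_n A (A.abs_mem m n 0) h

lemma abs_aSmul_le {m' m n : ℕ} (γ : Matrix (Fin m') (Fin m) ℂ) (hγ : cnorm γ ≤ 1)
    (v : Matrix (Fin m) (Fin n) V) :
    A.abs m n v - A.abs m' n (aSmul γ v) ∈ A.pos n := by
  have h := A.abs_smul_le m' m n n γ v (1 : Matrix (Fin n) (Fin n) ℂ)
  rw [smulB_one, smulB_one, abs_abs'] at h
  have h2 := pos_smul_mono A hγ (A.abs_mem m n v)
  have := A.pos_add n _ h _ h2
  rw [Complex.ofReal_one, one_smul] at this
  convert this using 1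
  abel

lemma abs_aSmul_unitary {m' m n : ℕ} (γ : Matrix (Fin m') (Fin m) ℂ)
    (h1 : γ.conjTranspose * γ = 1) (h2 : γ * γ.conjTranspose = 1)
    (v : Matrix (Fin m) (Fin n) V) :
    A.abs m' n (aSmul γ v) = A.abs m n v := by
  have hc : cnorm γ ≤ 1 := cnorm_le_one γ h1
  have hc' : cnorm γ.conjTranspose ≤ 1 := by
    apply cnorm_le_one
    rw [Matrix.conjTranspose_conjTranspose]
    exact h2
  have d1 := abs_aSmul_le A γ hc v
  have d2 := abs_aSmul_le A γ.conjTranspose hc' (aSmul γ v)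
  rw [aSmul_aSmul, h1, aSmul_one] at d2
  have := proper_n A d1 (by rwa [neg_sub])
  exact sub_eq_zero.mp this |>.symm

end ConeLemmas

set_option linter.unusedSectionVars false

section OPLemmas

variable {V : Type*} [AddCommGroup V] [Module ℂ V] [StarAddMonoid V] [StarModule ℂ V]

lemma mstar_add' {m n : ℕ} (u v : Matrix (Fin m) (Fin n) V) :
    mstar (u + v) = mstar u + mstar v := by
  funext i j; simp [mstar]

lemma mstar_sub' {m n : ℕ} (u v : Matrix (Fin m) (Fin n) V) :
    mstar (u - v) = mstar u - mstar v := by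
  funext i j; simp [mstar]

lemma mstar_smul' {m n : ℕ} (c : ℂ) (v : Matrix (Fin m) (Fin n) V) :
    mstar (c • v) = star c • mstar v := by
  funext i j; simp [mstar]

lemma mstar_zero' {m n : ℕ} : mstar (0 : Matrix (Fin m) (Fin n) V) = 0 := by
  funext i j; simp [mstar]

variable (A : AMOUS V)

lemma pos_mstar {n : ℕ} {x : Matrix (Fin n) (Fin n) V} (hx : x ∈ A.pos n) :
    mstar x = x := A.pos_star n x hx

lemma star_e : star A.e = A.e := by
  have h := A.pos_star 1 _ A.e_pos
  have := congrFun (congrFun h 0) 0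
  simpa [mstar, diagE] using this

lemma eN_pos (n : ℕ) : A.eN n ∈ A.pos n := by
  classical
  have single : ∀ i0 : Fin n,
      (fun i j => if i = i0 ∧ j = i0 then A.e else (0:V)) ∈ A.pos n := by
    intro i0
    have h := A.pos_conj n 1 (fun _ k => if k = i0 then 1 else 0) (diagE A.e 1) A.e_pos
    refine cast (congrArg (· ∈ A.pos n) ?_).symm h
    funext i j
    simp only [aSmul, smulB, Matrix.conjTranspose_apply, diagE, Matrix.of_apply]
    rw [Finset.sum_eq_single (0 : Fin 1) (by intro b _ hb; exact absurd (Subsingleton.elim b 0) hb)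
      (by intro hh; exact absurd (Finset.mem_univ _) hh)]
    rw [Finset.sum_eq_single (0 : Fin 1) (by intro b _ hb; exact absurd (Subsingleton.elim b 0) hb)
      (by intro hh; exact absurd (Finset.mem_univ _) hh)]
    by_cases hi : i = i0 <;> by_cases hj : j = i0 <;>
      simp [hi, hj, apply_ite (star : ℂ → ℂ), Matrix.conjTranspose, Matrix.map_apply, Matrix.transpose, Matrix.of_apply]
  have sum_pos : ∀ (s : Finset (Fin n)),
      (∑ i0 ∈ s, (fun i j => if i = i0 ∧ j = i0 then A.e else (0:V))) ∈ A.pos n := by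
    intro s
    induction s using Finset.induction with
    | empty => simp; exact pos_zero A n
    | insert _ _ hnotmem ih =>
        rw [Finset.sum_insert hnotmem]
        exact A.pos_add n _ (single _) _ ih
  have := sum_pos Finset.univ
  refine cast (congrArg (· ∈ A.pos n) ?_).symm this
  funext i j
  rw [Finset.sum_apply, Finset.sum_apply]
  by_cases hij : i = j
  · subst hij
    rw [Finset.sum_eq_single i (by intro b _ hb; simp [Ne.symm hb]) (by simp)]
    simp [AMOUS.eN, diagE]
  · rw [Finset.sum_eq_zero (by intro b _; simp only [ite_eq_right_iff]; rintro ⟨rfl, rfl⟩; exact absurd rfl hij)]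
    simp [AMOUS.eN, diagE, hij]

lemma mstar_eN (n : ℕ) : mstar (A.eN n) = A.eN n := pos_mstar A (eN_pos A n)

lemma abs_eN (n : ℕ) : A.abs n n (A.eN n) = A.eN n := A.abs_of_pos n _ (eN_pos A n)

/-- From an order projection we get positivity facts. -/
lemma op_pos {n : ℕ} {p : Matrix (Fin n) (Fin n) V} (hp : A.IsOP n p) : p ∈ A.pos n := by
  have h := (A.abs_add_self n ((2:ℂ) • p - A.eN n)
    (by rw [mstar_sub', mstar_smul', hp.1, mstar_eN]; norm_num)).1
  rw [hp.2] at h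
  have : A.eN n + ((2:ℂ) • p - A.eN n) = (2:ℂ) • p := by abel
  rw [this] at h
  exact pos_half A h

lemma op_le_eN {n : ℕ} {p : Matrix (Fin n) (Fin n) V} (hp : A.IsOP n p) :
    A.eN n - p ∈ A.pos n := by
  have h := (A.abs_add_self n ((2:ℂ) • p - A.eN n)
    (by rw [mstar_sub', mstar_smul', hp.1, mstar_eN]; norm_num)).2
  rw [hp.2] at h
  have : A.eN n - ((2:ℂ) • p - A.eN n) = (2:ℂ) • (A.eN n - p) := by
    rw [smul_sub, two_smul, two_smul]; abel
  rw [this] at h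
  exact pos_half A h

lemma abs_op {n : ℕ} {p : Matrix (Fin n) (Fin n) V} (hp : A.IsOP n p) :
    A.abs n n p = p := A.abs_of_pos n _ (op_pos A hp)

lemma op_eN (n : ℕ) : A.IsOP n (A.eN n) := by
  refine ⟨mstar_eN A n, ?_⟩
  have : (2:ℂ) • A.eN n - A.eN n = A.eN n := by rw [two_smul]; abel
  rw [this, abs_eN]

lemma op_zero (n : ℕ) : A.IsOP n (0 : Matrix (Fin n) (Fin n) V) := by
  refine ⟨mstar_zero', ?_⟩
  have : (2:ℂ) • (0 : Matrix (Fin n) (Fin n) V) - A.eN n = -(A.eN n) := by simp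
  rw [this, abs_neg' A (mstar_eN A n), abs_eN]

lemma op_dsum {m n : ℕ} {p : Matrix (Fin m) (Fin m) V} {q : Matrix (Fin n) (Fin n) V}
    (hp : A.IsOP m p) (hq : A.IsOP n q) : A.IsOP (m + n) (dsum p q) := by
  constructor
  · rw [mstar_dsum, hp.1, hq.1]
  · have heN : A.eN (m + n) = dsum (A.eN m) (A.eN n) := diagE_dsum A.e m n
    have harg : (2:ℂ) • dsum p q - A.eN (m+n)
        = dsum ((2:ℂ) • p - A.eN m) ((2:ℂ) • q - A.eN n) := by
      rw [heN, dsum_sub, dsum_smul]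
    rw [harg, A.abs_dsum, hp.2, hq.2, heN]

/-- The key "corner" lemma: a self-adjoint `p` with `|2p − q| = q` for an order
projection `q` is itself an order projection. -/
lemma op_corner {n : ℕ} {p q : Matrix (Fin n) (Fin n) V} (hq : A.IsOP n q)
    (hps : mstar p = p) (habs : A.abs n n ((2:ℂ) • p - q) = q) : A.IsOP n p := by
  have hqpos : q ∈ A.pos n := op_pos A hq
  have h2pq_star : mstar ((2:ℂ) • p - q) = (2:ℂ) • p - q := by
    rw [mstar_sub', mstar_smul', hps, pos_mstar A hqpos]; norm_num
  -- p ∈ pos, q - p ∈ pos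
  have hp2 := (A.abs_add_self n _ h2pq_star).1
  rw [habs] at hp2
  have e1 : q + ((2:ℂ) • p - q) = (2:ℂ) • p := by abel
  rw [e1] at hp2
  have hppos : p ∈ A.pos n := pos_half A hp2
  have hqp2 := (A.abs_add_self n _ h2pq_star).2
  rw [habs] at hqp2
  have e2 : q - ((2:ℂ) • p - q) = (2:ℂ) • (q - p) := by
    rw [smul_sub, two_smul, two_smul]; abel
  rw [e2] at hqp2
  have hqppos : q - p ∈ A.pos n := pos_half A hqp2
  -- p ⊥ (q - p)
  have perp1 : A.abs n n (p - (q - p)) = p + (q - p) := by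
    have e3 : p - (q - p) = (2:ℂ) • p - q := by rw [two_smul]; abel
    have e4 : p + (q - p) = q := by abel
    rw [e3, e4, habs]
  -- (e - q) ⊥ q
  have heq_pos : A.eN n - q ∈ A.pos n := op_le_eN A hq
  have perp2 : A.abs n n ((A.eN n - q) - q) = (A.eN n - q) + q := by
    have e5 : (A.eN n - q) - q = -((2:ℂ) • q - A.eN n) := by rw [two_smul]; abel
    have e6 : (A.eN n - q) + q = A.eN n := by abel
    have hqstar : mstar ((2:ℂ) • q - A.eN n) = (2:ℂ) • q - A.eN n := by
      rw [mstar_sub', mstar_smul', pos_mstar A hqpos, mstar_eN]; norm_num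
    rw [e5, e6, abs_neg' A hqstar, hq.2]
  -- absorb: (e - q) ⊥ p
  have perp3 := A.absorb n (A.eN n - q) heq_pos q hqpos p hppos perp2 hqppos
  -- p ⊥ (e - q)
  have perp4 : A.abs n n (p - (A.eN n - q)) = p + (A.eN n - q) := by
    have hstar : mstar ((A.eN n - q) - p) = (A.eN n - q) - p := by
      rw [mstar_sub', mstar_sub', hps, pos_mstar A hqpos, mstar_eN]
    have := abs_neg' A hstar
    rw [perp3] at this
    have e7 : -((A.eN n - q) - p) = p - (A.eN n - q) := by abel
    rw [e7] at this
    rw [this]; abel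
  -- orthogonality of sums
  have key := (A.ortho_pm n p hppos (q - p) hqppos (A.eN n - q) heq_pos perp1 perp4).1
  have e8 : (q - p) + (A.eN n - q) = A.eN n - p := by abel
  rw [e8] at key
  have hep_pos : A.eN n - p ∈ A.pos n := by
    have := A.pos_add n _ hqppos _ heq_pos
    have e9 : (q - p) + (A.eN n - q) = A.eN n - p := by abel
    rwa [e9] at this
  have habs9 : A.abs n n (A.eN n - p) = A.eN n - p := A.abs_of_pos n _ hep_pos
  rw [habs9] at key
  refine ⟨hps, ?_⟩
  have e10 : p - (A.eN n - p) = (2:ℂ) • p - A.eN n := by rw [two_smul]; abel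
  have e11 : p + (A.eN n - p) = A.eN n := by abel
  rw [e10, e11] at key
  exact key

end OPLemmas

set_option linter.unusedSectionVars false

section PermMat

/-- The permutation scalar matrix associated to an equivalence of index types. -/
def permMat {a b : ℕ} (f : Fin a ≃ Fin b) : Matrix (Fin a) (Fin b) ℂ :=
  fun i j => if f i = j then 1 else 0

lemma permMat_conjTranspose {a b : ℕ} (f : Fin a ≃ Fin b) :
    (permMat f).conjTranspose = permMat f.symm := by
  funext i j
  simp only [Matrix.conjTranspose_apply, permMat, apply_ite (star : ℂ → ℂ), star_one, star_zero]
  congr 1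
  simp only [eq_iff_iff]
  constructor
  · rintro rfl; simp
  · rintro rfl; simp

lemma permMat_mul {a b c : ℕ} (f : Fin a ≃ Fin b) (g : Fin b ≃ Fin c) :
    permMat f * permMat g = permMat (f.trans g) := by
  funext i j
  simp only [Matrix.mul_apply, permMat]
  rw [Finset.sum_eq_single (f i) (by intro b _ hb; simp [Ne.symm hb]) (by simp)]
  simp [Equiv.trans_apply]
  congr

lemma permMat_refl {a : ℕ} : permMat (Equiv.refl (Fin a)) = 1 := by
  funext i j
  simp [permMat, Matrix.one_apply, Equiv.refl_apply]
  congr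

lemma permMat_unitary₁ {a b : ℕ} (f : Fin a ≃ Fin b) :
    (permMat f).conjTranspose * permMat f = 1 := by
  rw [permMat_conjTranspose, permMat_mul]
  simp [permMat_refl]

lemma permMat_unitary₂ {a b : ℕ} (f : Fin a ≃ Fin b) :
    permMat f * (permMat f).conjTranspose = 1 := by
  rw [permMat_conjTranspose, permMat_mul]
  simp [permMat_refl]

variable {V : Type*} [AddCommGroup V] [Module ℂ V] [StarAddMonoid V] [StarModule ℂ V]

lemma aSmul_permMat {a b n : ℕ} (f : Fin a ≃ Fin b) (v : Matrix (Fin b) (Fin n) V) :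
    aSmul (permMat f) v = fun i j => v (f i) j := by
  funext i j
  simp only [aSmul, permMat, ite_smul, one_smul, zero_smul]
  rw [Finset.sum_eq_single (f i) (by intro b _ hb; simp [Ne.symm hb]) (by simp)]
  simp

variable (A : AMOUS V)

lemma abs_reindex {a b n : ℕ} (f : Fin a ≃ Fin b) (v : Matrix (Fin b) (Fin n) V) :
    A.abs a n (aSmul (permMat f) v) = A.abs b n v :=
  abs_aSmul_unitary A (permMat f) (permMat_unitary₁ f) (permMat_unitary₂ f) v

end PermMat

section MapLemmas

variable {V W : Type*} [AddCommGroup V] [Module ℂ V] [StarAddMonoid V] [StarModule ℂ V]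
  [AddCommGroup W] [Module ℂ W] [StarAddMonoid W] [StarModule ℂ W]
variable (φ : V →ₗ[ℂ] W)

lemma mmap_zero {m n : ℕ} : mmap φ (0 : Matrix (Fin m) (Fin n) V) = 0 := by
  funext i j; simp [mmap]

lemma mmap_sub {m n : ℕ} (u v : Matrix (Fin m) (Fin n) V) :
    mmap φ (u - v) = mmap φ u - mmap φ v := by
  funext i j; simp [mmap]

lemma mmap_smul {m n : ℕ} (c : ℂ) (v : Matrix (Fin m) (Fin n) V) :
    mmap φ (c • v) = c • mmap φ v := by
  funext i j; simp [mmap]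

lemma mmap_dsum {m n r s : ℕ} (v : Matrix (Fin m) (Fin n) V) (w : Matrix (Fin r) (Fin s) V) :
    mmap φ (dsum v w) = dsum (mmap φ v) (mmap φ w) := by
  funext i j
  simp only [mmap, dsum]
  split_ifs <;> simp

lemma mmap_aSmul {r m n : ℕ} (a : Matrix (Fin r) (Fin m) ℂ) (v : Matrix (Fin m) (Fin n) V) :
    mmap φ (aSmul a v) = aSmul a (mmap φ v) := by
  funext i j
  simp [mmap, aSmul]

lemma mmap_diagE (x : V) (n : ℕ) : mmap φ (diagE x n) = diagE (φ x) n := by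
  funext i j
  simp only [mmap, diagE, Matrix.of_apply]
  split_ifs <;> simp

lemma mmap_mstar (hφstar : ∀ v : V, φ (star v) = star (φ v))
    {m n : ℕ} (v : Matrix (Fin m) (Fin n) V) :
    mstar (mmap φ v) = mmap φ (mstar v) := by
  funext i j
  simp [mmap, mstar, hφstar]

variable (A : AMOUS V) (B : AMOUS W)

lemma op_zero_level (p : Matrix (Fin 0) (Fin 0) W) : B.IsOP 0 p := by
  constructor
  · funext i; exact i.elim0
  · funext i; exact i.elim0

lemma op_diagE {y : W} (h1 : B.IsOP 1 (diagE y 1)) (n : ℕ) : B.IsOP n (diagE y n) := by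
  induction n with
  | zero => exact op_zero_level B _
  | succ k ih =>
      have : (diagE y (k + 1) : Matrix (Fin (k+1)) (Fin (k+1)) W)
          = dsum (diagE y k) (diagE y 1) := diagE_dsum y k 1
      rw [this]
      exact op_dsum B ih h1

lemma op_mmap_eN (hφe : B.IsOP 1 (mmap φ (A.eN 1))) (n : ℕ) : B.IsOP n (mmap φ (A.eN n)) := by
  have h1 : mmap φ (A.eN n) = diagE (φ A.e) n := mmap_diagE φ A.e n
  have h2 : mmap φ (A.eN 1) = diagE (φ A.e) 1 := mmap_diagE φ A.e 1
  rw [h1]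
  exact op_diagE B (h2 ▸ hφe) n

lemma op_mmap (hφstar : ∀ v : V, φ (star v) = star (φ v)) (hφ : CAbsPres A B φ)
    (hφe : B.IsOP 1 (mmap φ (A.eN 1))) {n : ℕ} {p : Matrix (Fin n) (Fin n) V} (hp : A.IsOP n p) :
    B.IsOP n (mmap φ p) := by
  have hq := op_mmap_eN φ A B hφe n
  have hst := hφstar
  apply op_corner B hq
  · rw [mmap_mstar φ hφstar, hp.1]
  · have e1 : (2:ℂ) • mmap φ p - mmap φ (A.eN n) = mmap φ ((2:ℂ) • p - A.eN n) := by
      rw [mmap_sub, mmap_smul]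
    rw [e1, hφ n, hp.2]

/-- Rectangular amplifications of a completely `|·|`-preserving map also
preserve the absolute value. -/
lemma abs_mmap_rect (hφ : CAbsPres A B φ) {m n : ℕ} (v : Matrix (Fin m) (Fin n) V) :
    B.abs m n (mmap φ v) = mmap φ (A.abs m n v) := by
  classical
  set f : Fin (n + m) ≃ Fin (m + n) := finCongr (by omega) with hf
  have key : ∀ (C : AMOUS V) (w : Matrix (Fin m) (Fin n) V),
      C.abs (n+m) (n+m) (aSmul (permMat f) (dsum w (0 : Matrix (Fin n) (Fin m) V)))
        = dsum (C.abs m n w) 0 := by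
    intro C w
    rw [abs_reindex C f, C.abs_dsum m n n m, abs_zero_rect C]
  have keyB : ∀ (w : Matrix (Fin m) (Fin n) W),
      B.abs (n+m) (n+m) (aSmul (permMat f) (dsum w (0 : Matrix (Fin n) (Fin m) W)))
        = dsum (B.abs m n w) 0 := by
    intro w
    rw [abs_reindex B f, B.abs_dsum m n n m, abs_zero_rect B]
  have hsq := hφ (n + m) (aSmul (permMat f) (dsum v (0 : Matrix (Fin n) (Fin m) V)))
  rw [key A v] at hsq
  have e1 : mmap φ (aSmul (permMat f) (dsum v (0 : Matrix (Fin n) (Fin m) V)))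
      = aSmul (permMat f) (dsum (mmap φ v) (0 : Matrix (Fin n) (Fin m) W)) := by
    rw [mmap_aSmul, mmap_dsum, mmap_zero]
  rw [e1, keyB] at hsq
  have e2 : mmap φ (dsum (A.abs m n v) (0 : Matrix (Fin m) (Fin m) V))
      = dsum (mmap φ (A.abs m n v)) (0 : Matrix (Fin m) (Fin m) W) := by
    rw [mmap_dsum, mmap_zero]
  rw [e2] at hsq
  exact dsum_left_inj hsq

end MapLemmas

set_option linter.unusedSectionVars false
set_option maxHeartbeats 1000000

section SimMachinery

variable {V : Type*} [AddCommGroup V] [Module ℂ V] [StarAddMonoid V] [StarModule ℂ V]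

lemma smulB_permMat {m a b : ℕ} (g : Fin a ≃ Fin b) (v : Matrix (Fin m) (Fin a) V) :
    smulB v (permMat g) = fun i j => v i (g.symm j) := by
  funext i j
  simp only [smulB, permMat, ite_smul, one_smul, zero_smul]
  rw [Finset.sum_eq_single (g.symm j)
      (fun b _ hb => if_neg fun hc => hb (by rw [← hc, Equiv.symm_apply_apply]))
      (fun h => absurd (Finset.mem_univ _) h)]
  simp

/-- The index swap `Fin (a+b) ≃ Fin (b+a)`. -/
def swapEquiv (a b : ℕ) : Fin (a + b) ≃ Fin (b + a) where
  toFun i := ⟨if (i : ℕ) < a then (i : ℕ) + b else (i : ℕ) - a,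
    by have := i.isLt; split_ifs <;> omega⟩
  invFun j := ⟨if (j : ℕ) < b then (j : ℕ) + a else (j : ℕ) - b,
    by have := j.isLt; split_ifs <;> omega⟩
  left_inv i := by
    have := i.isLt
    apply Fin.ext
    show (if (if (i:ℕ) < a then (i:ℕ) + b else (i:ℕ) - a) < b
      then (if (i:ℕ) < a then (i:ℕ) + b else (i:ℕ) - a) + a
      else (if (i:ℕ) < a then (i:ℕ) + b else (i:ℕ) - a) - b) = (i:ℕ)
    split_ifs <;> omega
  right_inv j := by
    have := j.isLt
    apply Fin.ext
    show (if (if (j:ℕ) < b then (j:ℕ) + a else (j:ℕ) - b) < a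
      then (if (j:ℕ) < b then (j:ℕ) + a else (j:ℕ) - b) + b
      else (if (j:ℕ) < b then (j:ℕ) + a else (j:ℕ) - b) - a) = (j:ℕ)
    split_ifs <;> omega

lemma swapEquiv_coe (a b : ℕ) (i : Fin (a + b)) :
    ((swapEquiv a b i : Fin (b + a)) : ℕ) = if (i : ℕ) < a then (i : ℕ) + b else (i : ℕ) - a :=
  rfl

lemma dsum_swap_apply {a b : ℕ} (x : Matrix (Fin a) (Fin a) V) (y : Matrix (Fin b) (Fin b) V)
    (i j : Fin (b + a)) :
    dsum y x i j = dsum x y (swapEquiv b a i) (swapEquiv b a j) := by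
  have hi := i.isLt
  have hj := j.isLt
  simp only [dsum, swapEquiv_coe]
  split_ifs <;>
    first
      | rfl
      | (exfalso; omega)
      | (congr 2 <;> first
          | rfl
          | omega
          | (apply Fin.ext; omega))

lemma dsum_assoc_apply {a b c : ℕ} (x : Matrix (Fin a) (Fin a) V)
    (y : Matrix (Fin b) (Fin b) V) (z : Matrix (Fin c) (Fin c) V)
    (h : a + (b + c) = (a + b) + c) (i j : Fin (a + (b + c))) :
    dsum x (dsum y z) i j = dsum (dsum x y) z (finCongr h i) (finCongr h j) := by
  have hi := i.isLt
  have hj := j.isLt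
  simp only [dsum, finCongr_apply, Fin.coe_cast]
  split_ifs <;>
    first
      | rfl
      | (exfalso; omega)
      | (congr 2 <;> first
          | rfl
          | omega
          | (apply Fin.ext; omega))

variable (A : AMOUS V)

lemma sim_isOPE {p q : OPE V} (h : A.Sim p q) : A.IsOPE p ∧ A.IsOPE q := by
  obtain ⟨v, hPI, hp, hq⟩ := h
  exact ⟨by show A.IsOP p.1 p.2; rw [hp]; exact hPI.2,
    by show A.IsOP q.1 q.2; rw [hq]; exact hPI.1⟩

lemma sim_refl {p : OPE V} (hp : A.IsOPE p) : A.Sim p p := by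
  refine ⟨p.2, ⟨?_, ?_⟩, ?_, ?_⟩
  · rw [abs_op A hp]; exact hp
  · rw [hp.1, abs_op A hp]; exact hp
  · rw [hp.1, abs_op A hp]
  · rw [abs_op A hp]

lemma sim_symm {p q : OPE V} (h : A.Sim p q) : A.Sim q p := by
  obtain ⟨v, hPI, hp, hq⟩ := h
  refine ⟨mstar v, ⟨hPI.2, ?_⟩, ?_, hp⟩
  · rw [mstar_mstar]; exact hPI.1
  · rw [mstar_mstar]; exact hq

lemma sim_trans (hT : A.CondT) {p q r : OPE V} (h1 : A.Sim p q) (h2 : A.Sim q r) :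
    A.Sim p r := by
  obtain ⟨v, hv, hp, hq⟩ := h1
  obtain ⟨w, hw, hq', hr⟩ := h2
  have hwPI : A.IsPI (mstar w) := by
    refine ⟨hw.2, ?_⟩
    rw [mstar_mstar]
    exact hw.1
  have habs : A.abs p.1 q.1 v = A.abs r.1 q.1 (mstar w) := by
    rw [← hq, ← hq']
  obtain ⟨u, hu, h1, h2⟩ := hT p.1 q.1 r.1 v (mstar w) hv hwPI habs
  rw [mstar_mstar] at h2
  exact ⟨u, hu, by rw [h1, ← hp], by rw [h2, ← hr]⟩

lemma reindex_sim {p q : OPE V} (hp : A.IsOPE p) (hq : A.IsOPE q)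
    (f : Fin q.1 ≃ Fin p.1) (hent : ∀ i j, q.2 i j = p.2 (f i) (f j)) : A.Sim p q := by
  set v : Matrix (Fin p.1) (Fin q.1) V := aSmul (permMat f.symm) q.2 with hv
  have habsv : A.abs p.1 q.1 v = q.2 := by
    rw [hv, abs_reindex A f.symm, abs_op A hq]
  have hmstar : mstar v = aSmul (permMat f) p.2 := by
    rw [hv, mstar_aSmul, hq.1, permMat_conjTranspose, Equiv.symm_symm,
      smulB_permMat, aSmul_permMat]
    funext i j
    rw [hent i (f.symm j), Equiv.apply_symm_apply]
  have habsm : A.abs q.1 p.1 (mstar v) = p.2 := by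
    rw [hmstar, abs_reindex A f, abs_op A hp]
  exact ⟨v, ⟨habsv ▸ hq, habsm ▸ hp⟩, habsm.symm, habsv.symm⟩

lemma isOPE_d {p q : OPE V} (hp : A.IsOPE p) (hq : A.IsOPE q) : A.IsOPE (p.d q) :=
  op_dsum A hp hq

lemma isOPE_zero : A.IsOPE (OPE.zero V) := op_zero A 1

lemma sim_dsum {p p' q q' : OPE V} (h1 : A.Sim p p') (h2 : A.Sim q q') :
    A.Sim (p.d q) (p'.d q') := by
  obtain ⟨v, hv, hp, hp'⟩ := h1
  obtain ⟨w, hw, hq, hq'⟩ := h2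
  refine ⟨dsum v w, ⟨?_, ?_⟩, ?_, ?_⟩
  · show A.IsOP (p'.1 + q'.1) (A.abs (p.1 + q.1) (p'.1 + q'.1) (dsum v w))
    rw [A.abs_dsum]
    exact op_dsum A (hp' ▸ hv.1) (hq' ▸ hw.1)
  · show A.IsOP (p.1 + q.1) (A.abs (p'.1 + q'.1) (p.1 + q.1) (mstar (dsum v w)))
    rw [mstar_dsum, A.abs_dsum]
    exact op_dsum A (hp ▸ hv.2) (hq ▸ hw.2)
  · show dsum p.2 q.2 = A.abs (p'.1 + q'.1) (p.1 + q.1) (mstar (dsum v w))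
    rw [mstar_dsum, A.abs_dsum, ← hp, ← hq]
  · show dsum p'.2 q'.2 = A.abs (p.1 + q.1) (p'.1 + q'.1) (dsum v w)
    rw [A.abs_dsum, ← hp', ← hq']

lemma sim_swap {p q : OPE V} (hp : A.IsOPE p) (hq : A.IsOPE q) :
    A.Sim (p.d q) (q.d p) := by
  refine reindex_sim A (isOPE_d A hp hq) (isOPE_d A hq hp) (swapEquiv q.1 p.1) ?_
  intro i j
  exact dsum_swap_apply p.2 q.2 i j

lemma sim_assoc {p q r : OPE V} (hp : A.IsOPE p) (hq : A.IsOPE q) (hr : A.IsOPE r) :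
    A.Sim ((p.d q).d r) (p.d (q.d r)) := by
  refine reindex_sim A (isOPE_d A (isOPE_d A hp hq) hr) (isOPE_d A hp (isOPE_d A hq hr))
    (finCongr (add_assoc p.1 q.1 r.1).symm) ?_
  intro i j
  exact dsum_assoc_apply p.2 q.2 r.2 (add_assoc p.1 q.1 r.1).symm i j

end SimMachinery

set_option linter.unusedSectionVars false
set_option maxHeartbeats 1000000

section ASimMachinery

variable {V : Type*} [AddCommGroup V] [Module ℂ V] [StarAddMonoid V] [StarModule ℂ V]

lemma dsum_right_inj {m n r s : ℕ} {v v' : Matrix (Fin m) (Fin n) V}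
    {w w' : Matrix (Fin r) (Fin s) V} (h : dsum v w = dsum v' w') : w = w' := by
  funext i j
  have := congrFun (congrFun h ⟨(i : ℕ) + m, by omega⟩) ⟨(j : ℕ) + n, by omega⟩
  simp only [dsum] at this
  rw [dif_neg (by omega), dif_neg (by omega), dif_neg (by omega), dif_neg (by omega)] at this
  simpa using this

variable (A : AMOUS V)

lemma op_dsum_left {m n : ℕ} {p : Matrix (Fin m) (Fin m) V} {q : Matrix (Fin n) (Fin n) V}
    (h : A.IsOP (m + n) (dsum p q)) : A.IsOP m p := by
  constructor
  · have h1 := h.1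
    rw [mstar_dsum] at h1
    exact dsum_left_inj h1
  · have h2 := h.2
    rw [show A.eN (m+n) = dsum (A.eN m) (A.eN n) from diagE_dsum A.e m n,
      show (2:ℂ) • dsum p q - dsum (A.eN m) (A.eN n)
        = dsum ((2:ℂ) • p - A.eN m) ((2:ℂ) • q - A.eN n) by rw [dsum_sub, dsum_smul],
      A.abs_dsum] at h2
    exact dsum_left_inj h2

lemma op_dsum_right {m n : ℕ} {p : Matrix (Fin m) (Fin m) V} {q : Matrix (Fin n) (Fin n) V}
    (h : A.IsOP (m + n) (dsum p q)) : A.IsOP n q := by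
  constructor
  · have h1 := h.1
    rw [mstar_dsum] at h1
    exact dsum_right_inj h1
  · have h2 := h.2
    rw [show A.eN (m+n) = dsum (A.eN m) (A.eN n) from diagE_dsum A.e m n,
      show (2:ℂ) • dsum p q - dsum (A.eN m) (A.eN n)
        = dsum ((2:ℂ) • p - A.eN m) ((2:ℂ) • q - A.eN n) by rw [dsum_sub, dsum_smul],
      A.abs_dsum] at h2
    exact dsum_right_inj h2

lemma isOPE_d_left {p q : OPE V} (h : A.IsOPE (p.d q)) : A.IsOPE p := op_dsum_left A h

lemma isOPE_d_right {p q : OPE V} (h : A.IsOPE (p.d q)) : A.IsOPE q := op_dsum_right A h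

lemma asim_of_sim {p q : OPE V} (h : A.Sim p q) : A.ASim p q :=
  ⟨OPE.zero V, isOPE_zero A, sim_dsum A h (sim_refl A (isOPE_zero A))⟩

lemma asim_refl {p : OPE V} (hp : A.IsOPE p) : A.ASim p p :=
  asim_of_sim A (sim_refl A hp)

lemma asim_symm {p q : OPE V} (h : A.ASim p q) : A.ASim q p := by
  obtain ⟨r, hr, hs⟩ := h
  exact ⟨r, hr, sim_symm A hs⟩

variable (hT : A.CondT)
include hT

lemma sim_congr_left {p q q' : OPE V} (hp : A.IsOPE p) (h : A.Sim q q') :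
    A.Sim (p.d q) (p.d q') := sim_dsum A (sim_refl A hp) h

/-- `(u ⊕ v) ⊕ w ∼ (u ⊕ w) ⊕ v`. -/
lemma sim_rot {u v w : OPE V} (hu : A.IsOPE u) (hv : A.IsOPE v) (hw : A.IsOPE w) :
    A.Sim ((u.d v).d w) ((u.d w).d v) := by
  refine sim_trans A hT (sim_assoc A hu hv hw) (sim_trans A hT ?_
    (sim_symm A (sim_assoc A hu hw hv)))
  exact sim_congr_left A hT hu (sim_swap A hv hw)

/-- Middle exchange: `(a ⊕ b) ⊕ (c ⊕ d) ∼ (a ⊕ c) ⊕ (b ⊕ d)`. -/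
lemma sim_exch {a b c d : OPE V} (ha : A.IsOPE a) (hb : A.IsOPE b) (hc : A.IsOPE c)
    (hd : A.IsOPE d) : A.Sim ((a.d b).d (c.d d)) ((a.d c).d (b.d d)) := by
  have s1 : A.Sim ((a.d b).d (c.d d)) (a.d (b.d (c.d d))) :=
    sim_assoc A ha hb (isOPE_d A hc hd)
  have s2 : A.Sim (b.d (c.d d)) ((b.d c).d d) :=
    sim_symm A (sim_assoc A hb hc hd)
  have s3 : A.Sim ((b.d c).d d) ((c.d b).d d) :=
    sim_dsum A (sim_swap A hb hc) (sim_refl A hd)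
  have s4 : A.Sim ((c.d b).d d) (c.d (b.d d)) := sim_assoc A hc hb hd
  have s5 : A.Sim (a.d (b.d (c.d d))) (a.d (c.d (b.d d))) :=
    sim_congr_left A hT ha (sim_trans A hT s2 (sim_trans A hT s3 s4))
  have s6 : A.Sim (a.d (c.d (b.d d))) ((a.d c).d (b.d d)) :=
    sim_symm A (sim_assoc A ha hc (isOPE_d A hb hd))
  exact sim_trans A hT s1 (sim_trans A hT s5 s6)

lemma asim_isOPE {p q : OPE V} (h : A.ASim p q) : A.IsOPE p ∧ A.IsOPE q := by
  obtain ⟨r, hr, hs⟩ := h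
  have := sim_isOPE A hs
  exact ⟨isOPE_d_left A this.1, isOPE_d_left A this.2⟩

lemma asim_dsum {a b c d : OPE V} (h1 : A.ASim a b) (h2 : A.ASim c d) :
    A.ASim (a.d c) (b.d d) := by
  obtain ⟨r, hr, s1⟩ := h1
  obtain ⟨s, hs, s2⟩ := h2
  have har := sim_isOPE A s1
  have hcs := sim_isOPE A s2
  have ha := isOPE_d_left A har.1
  have hb := isOPE_d_left A har.2
  have hc := isOPE_d_left A hcs.1
  have hd := isOPE_d_left A hcs.2
  refine ⟨r.d s, isOPE_d A hr hs, ?_⟩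
  have e1 : A.Sim ((a.d c).d (r.d s)) ((a.d r).d (c.d s)) := sim_exch A hT ha hc hr hs
  have e2 : A.Sim ((a.d r).d (c.d s)) ((b.d r).d (d.d s)) := sim_dsum A s1 s2
  have e3 : A.Sim ((b.d r).d (d.d s)) ((b.d d).d (r.d s)) := sim_exch A hT hb hr hd hs
  exact sim_trans A hT e1 (sim_trans A hT e2 e3)

lemma asim_trans {a b c : OPE V} (h1 : A.ASim a b) (h2 : A.ASim b c) : A.ASim a c := by
  obtain ⟨r, hr, s1⟩ := h1
  obtain ⟨s, hs, s2⟩ := h2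
  have har := sim_isOPE A s1
  have hbs := sim_isOPE A s2
  have ha := isOPE_d_left A har.1
  have hb := isOPE_d_left A har.2
  have hc := isOPE_d_left A hbs.2
  refine ⟨r.d s, isOPE_d A hr hs, ?_⟩
  have e1 : A.Sim (a.d (r.d s)) ((a.d r).d s) := sim_symm A (sim_assoc A ha hr hs)
  have e2 : A.Sim ((a.d r).d s) ((b.d r).d s) := sim_dsum A s1 (sim_refl A hs)
  have e3 : A.Sim ((b.d r).d s) ((b.d s).d r) := sim_rot A hT hb hr hs
  have e4 : A.Sim ((b.d s).d r) ((c.d s).d r) := sim_dsum A s2 (sim_refl A hr)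
  have e5 : A.Sim ((c.d s).d r) ((c.d r).d s) := sim_rot A hT hc hs hr
  have e6 : A.Sim ((c.d r).d s) (c.d (r.d s)) := sim_assoc A hc hr hs
  exact sim_trans A hT e1 (sim_trans A hT e2 (sim_trans A hT e3
    (sim_trans A hT e4 (sim_trans A hT e5 e6))))

lemma asim_unstab {a b c : OPE V} (h : A.ASim (a.d c) (b.d c)) : A.ASim a b := by
  obtain ⟨r, hr, hs⟩ := h
  have hev := sim_isOPE A hs
  have ha := isOPE_d_left A (isOPE_d_left A hev.1)
  have hb := isOPE_d_left A (isOPE_d_left A hev.2)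
  have hc := isOPE_d_right A (isOPE_d_left A hev.1)
  refine ⟨c.d r, isOPE_d A hc hr, ?_⟩
  exact sim_trans A hT (sim_symm A (sim_assoc A ha hc hr))
    (sim_trans A hT hs (sim_assoc A hb hc hr))

end ASimMachinery

section KrelMachinery

variable {V : Type*} [AddCommGroup V] [Module ℂ V] [StarAddMonoid V] [StarModule ℂ V]
variable (A : AMOUS V) (hT : A.CondT)
include hT

lemma krel_refl {x : OPE V × OPE V} (hx : A.IsOPPair x) : A.Krel x x :=
  asim_refl A (isOPE_d A hx.1 hx.2)

lemma krel_symm {x y : OPE V × OPE V} (h : A.Krel x y) : A.Krel y x :=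
  asim_symm A h

lemma krel_trans {x y z : OPE V × OPE V} (hx : A.IsOPPair x) (hy : A.IsOPPair y)
    (hz : A.IsOPPair z) (h1 : A.Krel x y) (h2 : A.Krel y z) : A.Krel x z := by
  have t1 : A.ASim ((x.1.d y.2).d z.2) ((y.1.d x.2).d z.2) :=
    asim_dsum A hT h1 (asim_refl A hz.2)
  have r1 : A.Sim ((x.1.d z.2).d y.2) ((x.1.d y.2).d z.2) := sim_rot A hT hx.1 hz.2 hy.2
  have r2 : A.Sim ((y.1.d x.2).d z.2) ((y.1.d z.2).d x.2) := sim_rot A hT hy.1 hx.2 hz.2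
  have t2 : A.ASim ((y.1.d z.2).d x.2) ((z.1.d y.2).d x.2) :=
    asim_dsum A hT h2 (asim_refl A hx.2)
  have r3 : A.Sim ((z.1.d y.2).d x.2) ((z.1.d x.2).d y.2) := sim_rot A hT hz.1 hy.2 hx.2
  have chain : A.ASim ((x.1.d z.2).d y.2) ((z.1.d x.2).d y.2) :=
    asim_trans A hT (asim_of_sim A r1) (asim_trans A hT t1 (asim_trans A hT
      (asim_of_sim A r2) (asim_trans A hT t2 (asim_of_sim A r3))))
  exact asim_unstab A hT chain

lemma krel_kadd {x x' y y' : OPE V × OPE V} (hx : A.IsOPPair x) (hx' : A.IsOPPair x')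
    (hy : A.IsOPPair y) (hy' : A.IsOPPair y') (h1 : A.Krel x x') (h2 : A.Krel y y') :
    A.Krel (AMOUS.kadd x y) (AMOUS.kadd x' y') := by
  have t := asim_dsum A hT h1 h2
  have e1 : A.Sim ((x.1.d y.1).d (x'.2.d y'.2)) ((x.1.d x'.2).d (y.1.d y'.2)) :=
    sim_exch A hT hx.1 hy.1 hx'.2 hy'.2
  have e2 : A.Sim ((x'.1.d x.2).d (y'.1.d y.2)) ((x'.1.d y'.1).d (x.2.d y.2)) :=
    sim_exch A hT hx'.1 hx.2 hy'.1 hy.2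
  exact asim_trans A hT (asim_of_sim A e1) (asim_trans A hT t (asim_of_sim A e2))

lemma krel_cancel {a b : OPE V × OPE V} {c : OPE V} (ha : A.IsOPPair a) (hb : A.IsOPPair b)
    (hc : A.IsOPE c)
    (h : A.Krel (AMOUS.kadd a (c, OPE.zero V)) (AMOUS.kadd b (c, OPE.zero V))) :
    A.Krel a b := by
  have hz := isOPE_zero A
  have e1 : A.Sim ((a.1.d b.2).d (c.d (OPE.zero V))) ((a.1.d c).d (b.2.d (OPE.zero V))) :=
    sim_exch A hT ha.1 hb.2 hc hz
  have e2 : A.Sim ((b.1.d c).d (a.2.d (OPE.zero V))) ((b.1.d a.2).d (c.d (OPE.zero V))) :=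
    sim_exch A hT hb.1 hc ha.2 hz
  have chain : A.ASim ((a.1.d b.2).d (c.d (OPE.zero V))) ((b.1.d a.2).d (c.d (OPE.zero V))) :=
    asim_trans A hT (asim_of_sim A e1) (asim_trans A hT h (asim_of_sim A e2))
  exact asim_unstab A hT chain

lemma krel_normal {p q : OPE V} (hp : A.IsOPE p) (hq : A.IsOPE q) :
    A.Krel (AMOUS.kadd (p, q) (q, OPE.zero V))
      (AMOUS.kadd (p, OPE.zero V) (OPE.zero V, OPE.zero V)) := by
  have hz := isOPE_zero A
  exact asim_of_sim A (sim_exch A hT hp hq hz hz)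

end KrelMachinery

set_option linter.unusedSectionVars false
set_option maxHeartbeats 1000000

section Functorial

variable {V W : Type*} [AddCommGroup V] [Module ℂ V] [StarAddMonoid V] [StarModule ℂ V]
  [AddCommGroup W] [Module ℂ W] [StarAddMonoid W] [StarModule ℂ W]

lemma mmapOPE_d (φ : V →ₗ[ℂ] W) (p q : OPE V) :
    mmapOPE φ (p.d q) = (mmapOPE φ p).d (mmapOPE φ q) := by
  show (⟨p.1 + q.1, mmap φ (dsum p.2 q.2)⟩ : OPE W)
    = ⟨p.1 + q.1, dsum (mmap φ p.2) (mmap φ q.2)⟩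
  rw [mmap_dsum]

lemma mmapOPE_zero (φ : V →ₗ[ℂ] W) : mmapOPE φ (OPE.zero V) = OPE.zero W := by
  show (⟨1, mmap φ (0 : Matrix (Fin 1) (Fin 1) V)⟩ : OPE W) = ⟨1, 0⟩
  rw [mmap_zero]

variable (A : AMOUS V) (B : AMOUS W) (φ : V →ₗ[ℂ] W)
  (hφstar : ∀ v : V, φ (star v) = star (φ v)) (hφ : CAbsPres A B φ)
  (hφe : B.IsOP 1 (mmap φ (A.eN 1)))

include hφstar hφ hφe

lemma op_mmapOPE {p : OPE V} (hp : A.IsOPE p) : B.IsOPE (mmapOPE φ p) :=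
  op_mmap φ A B hφstar hφ hφe hp

lemma pi_mmap {m n : ℕ} {v : Matrix (Fin m) (Fin n) V} (hv : A.IsPI v) :
    B.IsPI (mmap φ v) := by
  constructor
  · rw [abs_mmap_rect φ A B hφ]
    exact op_mmap φ A B hφstar hφ hφe hv.1
  · rw [mmap_mstar φ hφstar, abs_mmap_rect φ A B hφ]
    exact op_mmap φ A B hφstar hφ hφe hv.2

lemma sim_mmap {p q : OPE V} (h : A.Sim p q) :
    B.Sim (mmapOPE φ p) (mmapOPE φ q) := by
  obtain ⟨v, hv, hp, hq⟩ := h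
  refine ⟨mmap φ v, pi_mmap A B φ hφstar hφ hφe hv, ?_, ?_⟩
  · show mmap φ p.2 = B.abs q.1 p.1 (mstar (mmap φ v))
    rw [mmap_mstar φ hφstar, abs_mmap_rect φ A B hφ, ← hp]
  · show mmap φ q.2 = B.abs p.1 q.1 (mmap φ v)
    rw [abs_mmap_rect φ A B hφ, ← hq]

lemma asim_mmap {p q : OPE V} (h : A.ASim p q) :
    B.ASim (mmapOPE φ p) (mmapOPE φ q) := by
  obtain ⟨r, hr, hs⟩ := h
  refine ⟨mmapOPE φ r, op_mmapOPE A B φ hφstar hφ hφe hr, ?_⟩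
  rw [← mmapOPE_d, ← mmapOPE_d]
  exact sim_mmap A B φ hφstar hφ hφe hs

lemma krel_mmap {x y : OPE V × OPE V} (h : A.Krel x y) :
    B.Krel (mmapOPE φ x.1, mmapOPE φ x.2) (mmapOPE φ y.1, mmapOPE φ y.2) := by
  show B.ASim ((mmapOPE φ x.1).d (mmapOPE φ y.2)) ((mmapOPE φ y.1).d (mmapOPE φ x.2))
  rw [← mmapOPE_d, ← mmapOPE_d]
  exact asim_mmap A B φ hφstar hφ hφe h

end Functorial

section KrelDet

variable {V W : Type*} [AddCommGroup V] [Module ℂ V] [StarAddMonoid V] [StarModule ℂ V]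
  [AddCommGroup W] [Module ℂ W] [StarAddMonoid W] [StarModule ℂ W]
variable (A : AMOUS V) (B : AMOUS W)

lemma isOPPair_kadd {x y : OPE V × OPE V} (hx : A.IsOPPair x) (hy : A.IsOPPair y) :
    A.IsOPPair (AMOUS.kadd x y) :=
  ⟨isOPE_d A hx.1 hy.1, isOPE_d A hx.2 hy.2⟩

variable (hTA : A.CondT) (hTB : B.CondT) (φ : V →ₗ[ℂ] W)
  (hφOPE : ∀ p : OPE V, A.IsOPE p → B.IsOPE (mmapOPE φ p))

include hTA hTB hφOPE

lemma krel_claim (G : OPE V × OPE V → OPE W × OPE W) (hG : K0HomProp A B φ G)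
    (p q : OPE V) (hp : A.IsOPE p) (hq : A.IsOPE q) :
    B.Krel (AMOUS.kadd (G (p, q)) (mmapOPE φ q, OPE.zero W))
      (AMOUS.kadd (mmapOPE φ p, OPE.zero W) (OPE.zero W, OPE.zero W)) := by
  have hzA := isOPE_zero A
  have hzB := isOPE_zero B
  have hx : A.IsOPPair (p, q) := ⟨hp, hq⟩
  have hq0 : A.IsOPPair (q, OPE.zero V) := ⟨hq, hzA⟩
  have hp0 : A.IsOPPair (p, OPE.zero V) := ⟨hp, hzA⟩
  have h00 : A.IsOPPair (OPE.zero V, OPE.zero V) := ⟨hzA, hzA⟩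
  have hk1 : A.IsOPPair (AMOUS.kadd (p, q) (q, OPE.zero V)) := isOPPair_kadd A hx hq0
  have hk2 : A.IsOPPair (AMOUS.kadd (p, OPE.zero V) (OPE.zero V, OPE.zero V)) :=
    isOPPair_kadd A hp0 h00
  -- pieces of K0HomProp
  have hGx : B.IsOPPair (G (p, q)) := hG.1 _ hx
  have hGq0 : B.IsOPPair (G (q, OPE.zero V)) := hG.1 _ hq0
  have hGp0 : B.IsOPPair (G (p, OPE.zero V)) := hG.1 _ hp0
  have hG00 : B.IsOPPair (G (OPE.zero V, OPE.zero V)) := hG.1 _ h00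
  have hφq0 : B.IsOPPair (mmapOPE φ q, OPE.zero W) := ⟨hφOPE q hq, hzB⟩
  have hφp0 : B.IsOPPair (mmapOPE φ p, OPE.zero W) := ⟨hφOPE p hp, hzB⟩
  have h0w : B.IsOPPair (OPE.zero W, OPE.zero W) := ⟨hzB, hzB⟩
  have h6 : B.Krel (G (q, OPE.zero V)) (mmapOPE φ q, OPE.zero W) := hG.2.2.2 q hq
  have h4 : B.Krel (G (p, OPE.zero V)) (mmapOPE φ p, OPE.zero W) := hG.2.2.2 p hp
  have h5 : B.Krel (G (OPE.zero V, OPE.zero V)) (OPE.zero W, OPE.zero W) := by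
    have := hG.2.2.2 (OPE.zero V) hzA
    rwa [mmapOPE_zero] at this
  -- chain
  have r12 : B.Krel (AMOUS.kadd (G (p, q)) (mmapOPE φ q, OPE.zero W))
      (AMOUS.kadd (G (p, q)) (G (q, OPE.zero V))) :=
    krel_kadd B hTB hGx hGx hφq0 hGq0 (krel_refl B hTB hGx) (krel_symm B hTB h6)
  have r23 : B.Krel (AMOUS.kadd (G (p, q)) (G (q, OPE.zero V)))
      (G (AMOUS.kadd (p, q) (q, OPE.zero V))) :=
    krel_symm B hTB (hG.2.2.1 (p, q) (q, OPE.zero V) hx hq0)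
  have r34 : B.Krel (G (AMOUS.kadd (p, q) (q, OPE.zero V)))
      (G (AMOUS.kadd (p, OPE.zero V) (OPE.zero V, OPE.zero V))) :=
    hG.2.1 _ _ hk1 hk2 (krel_normal A hTA hp hq)
  have r45 : B.Krel (G (AMOUS.kadd (p, OPE.zero V) (OPE.zero V, OPE.zero V)))
      (AMOUS.kadd (G (p, OPE.zero V)) (G (OPE.zero V, OPE.zero V))) :=
    hG.2.2.1 (p, OPE.zero V) (OPE.zero V, OPE.zero V) hp0 h00
  have r56 : B.Krel (AMOUS.kadd (G (p, OPE.zero V)) (G (OPE.zero V, OPE.zero V)))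
      (AMOUS.kadd (mmapOPE φ p, OPE.zero W) (OPE.zero W, OPE.zero W)) :=
    krel_kadd B hTB hGp0 hφp0 hG00 h0w h4 h5
  have P1 : B.IsOPPair (AMOUS.kadd (G (p, q)) (mmapOPE φ q, OPE.zero W)) :=
    isOPPair_kadd B hGx hφq0
  have P2 : B.IsOPPair (AMOUS.kadd (G (p, q)) (G (q, OPE.zero V))) :=
    isOPPair_kadd B hGx hGq0
  have P3 := hG.1 _ hk1
  have P4 := hG.1 _ hk2
  have P5 : B.IsOPPair (AMOUS.kadd (G (p, OPE.zero V)) (G (OPE.zero V, OPE.zero V))) :=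
    isOPPair_kadd B hGp0 hG00
  have P6 : B.IsOPPair (AMOUS.kadd (mmapOPE φ p, OPE.zero W) (OPE.zero W, OPE.zero W)) :=
    isOPPair_kadd B hφp0 h0w
  exact krel_trans B hTB P1 P2 P6
    r12 (krel_trans B hTB P2 P3 P6 r23
    (krel_trans B hTB P3 P4 P6 r34
    (krel_trans B hTB P4 P5 P6 r45 r56)))

lemma krel_det (G G' : OPE V × OPE V → OPE W × OPE W)
    (hG : K0HomProp A B φ G) (hG' : K0HomProp A B φ G') :
    ∀ x : OPE V × OPE V, A.IsOPPair x → B.Krel (G x) (G' x) := by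
  rintro ⟨p, q⟩ hx
  have hzB := isOPE_zero B
  have c1 := krel_claim A B hTA hTB φ hφOPE G hG p q hx.1 hx.2
  have c2 := krel_claim A B hTA hTB φ hφOPE G' hG' p q hx.1 hx.2
  have hGx : B.IsOPPair (G (p, q)) := hG.1 _ hx
  have hG'x : B.IsOPPair (G' (p, q)) := hG'.1 _ hx
  have hφq0 : B.IsOPPair (mmapOPE φ q, OPE.zero W) := ⟨hφOPE q hx.2, hzB⟩
  have hφp0 : B.IsOPPair (mmapOPE φ p, OPE.zero W) := ⟨hφOPE p hx.1, hzB⟩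
  have h0w : B.IsOPPair (OPE.zero W, OPE.zero W) := ⟨hzB, hzB⟩
  apply krel_cancel B hTB hGx hG'x (hφOPE q hx.2)
  exact krel_trans B hTB (isOPPair_kadd B hGx hφq0) (isOPPair_kadd B hφp0 h0w)
    (isOPPair_kadd B hG'x hφq0) c1 (krel_symm B hTB c2)

end KrelDet

section CompLemmas

variable {V W U' : Type*} [AddCommGroup V] [Module ℂ V] [StarAddMonoid V] [StarModule ℂ V]
  [AddCommGroup W] [Module ℂ W] [StarAddMonoid W] [StarModule ℂ W]
  [AddCommGroup U'] [Module ℂ U'] [StarAddMonoid U'] [StarModule ℂ U']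

lemma mmap_id {m n : ℕ} (v : Matrix (Fin m) (Fin n) V) :
    mmap (LinearMap.id : V →ₗ[ℂ] V) v = v := by
  funext i j; simp [mmap]

lemma mmapOPE_id (p : OPE V) : mmapOPE (LinearMap.id : V →ₗ[ℂ] V) p = p := by
  show (⟨p.1, mmap (LinearMap.id : V →ₗ[ℂ] V) p.2⟩ : OPE V) = p
  rw [mmap_id]
  rfl

lemma mmap_comp (φ : V →ₗ[ℂ] W) (ψ : W →ₗ[ℂ] U') {m n : ℕ}
    (v : Matrix (Fin m) (Fin n) V) : mmap (ψ ∘ₗ φ) v = mmap ψ (mmap φ v) := by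
  funext i j; simp [mmap]

lemma mmapOPE_comp (φ : V →ₗ[ℂ] W) (ψ : W →ₗ[ℂ] U') (p : OPE V) :
    mmapOPE (ψ ∘ₗ φ) p = mmapOPE ψ (mmapOPE φ p) := by
  show (⟨p.1, mmap (ψ ∘ₗ φ) p.2⟩ : OPE U') = ⟨p.1, mmap ψ (mmap φ p.2)⟩
  rw [mmap_comp]

end CompLemmas



/-- Functoriality of `K₀`: a completely `|·|`-preserving map
`φ : V → W` with `φ(e_V)` an order projection induces a unique group homomorphism
`K₀(φ) : K₀(V) → K₀(W)` with `K₀(φ)([(p,0)]) = [(φ(p),0)]`; moreover `K₀(id) = id`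
and `K₀(ψ ∘ φ) = K₀(ψ) ∘ K₀(φ)` for unital completely `|·|`-preserving maps.
(A group homomorphism `K₀(V) → K₀(W)` is encoded as a map `F` on representatives
which preserves order-projection pairs, respects `≡`, is additive, and makes the
diagram `χ_W ∘ φ = K₀(φ) ∘ χ_V` commute; equality of homomorphisms is equality of
the induced maps on classes.) -/
theorem statement17 {V W U : Type*} [AddCommGroup V] [Module ℂ V] [StarAddMonoid V]
    [StarModule ℂ V] [AddCommGroup W] [Module ℂ W] [StarAddMonoid W] [StarModule ℂ W]
    [AddCommGroup U] [Module ℂ U] [StarAddMonoid U] [StarModule ℂ U]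
    (A : AMOUS V) (B : AMOUS W) (Cu : AMOUS U)
    (hAabs : A.IsAbsolute) (hBabs : B.IsAbsolute) (hUabs : Cu.IsAbsolute)
    (hAT : A.CondT) (hBT : B.CondT) (hUT : Cu.CondT)
    (φ : V →ₗ[ℂ] W) (hφstar : ∀ v : V, φ (star v) = star (φ v))
    (hφ : CAbsPres A B φ) (hφe : B.IsOP 1 (mmap φ (A.eN 1))) :
    -- existence and uniqueness of `K₀(φ)` with the commuting diagram
    (∃ F : OPE V × OPE V → OPE W × OPE W, K0HomProp A B φ F ∧
      ∀ G : OPE V × OPE V → OPE W × OPE W, K0HomProp A B φ G →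
        ∀ x : OPE V × OPE V, A.IsOPPair x → B.Krel (F x) (G x)) ∧
    -- `K₀(id_V) = id_{K₀(V)}`
    (∀ F : OPE V × OPE V → OPE V × OPE V, K0HomProp A A LinearMap.id F →
      ∀ x : OPE V × OPE V, A.IsOPPair x → A.Krel (F x) x) ∧
    -- `K₀(ψ ∘ φ) = K₀(ψ) ∘ K₀(φ)` for unital maps
    (∀ ψ : W →ₗ[ℂ] U, (∀ w : W, ψ (star w) = star (ψ w)) → CAbsPres B Cu ψ →
      φ A.e = B.e → ψ B.e = Cu.e →
      ∀ (Fφ : OPE V × OPE V → OPE W × OPE W) (Fψ : OPE W × OPE W → OPE U × OPE U)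
        (Fc : OPE V × OPE V → OPE U × OPE U),
        K0HomProp A B φ Fφ → K0HomProp B Cu ψ Fψ → K0HomProp A Cu (ψ ∘ₗ φ) Fc →
        ∀ x : OPE V × OPE V, A.IsOPPair x → Cu.Krel (Fc x) (Fψ (Fφ x))) := by
  have hφOPE : ∀ p : OPE V, A.IsOPE p → B.IsOPE (mmapOPE φ p) :=
    fun p hp => op_mmapOPE A B φ hφstar hφ hφe hp
  set F : OPE V × OPE V → OPE W × OPE W := fun x => (mmapOPE φ x.1, mmapOPE φ x.2)
    with hFdef
  have hFprop : K0HomProp A B φ F := by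
    refine ⟨?_, ?_, ?_, ?_⟩
    · intro x hx
      exact ⟨hφOPE _ hx.1, hφOPE _ hx.2⟩
    · intro x y hx hy h
      exact krel_mmap A B φ hφstar hφ hφe h
    · intro x y hx hy
      have he : F (AMOUS.kadd x y) = AMOUS.kadd (F x) (F y) :=
        Prod.ext (mmapOPE_d φ x.1 y.1) (mmapOPE_d φ x.2 y.2)
      rw [he]
      exact krel_refl B hBT (isOPPair_kadd B ⟨hφOPE _ hx.1, hφOPE _ hx.2⟩
        ⟨hφOPE _ hy.1, hφOPE _ hy.2⟩)
    · intro p hp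
      have he : F (p, OPE.zero V) = (mmapOPE φ p, OPE.zero W) :=
        Prod.ext rfl (mmapOPE_zero φ)
      rw [he]
      exact krel_refl B hBT ⟨hφOPE p hp, isOPE_zero B⟩
  refine ⟨⟨F, hFprop, ?_⟩, ?_, ?_⟩
  · intro G hG x hx
    exact krel_det A B hAT hBT φ hφOPE F G hFprop hG x hx
  · -- identity
    intro F' hF' x hx
    have hidOPE : ∀ p : OPE V, A.IsOPE p →
        A.IsOPE (mmapOPE (LinearMap.id : V →ₗ[ℂ] V) p) := by
      intro p hp
      rw [mmapOPE_id]
      exact hp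
    have hIdProp : K0HomProp A A LinearMap.id (fun x => x) := by
      refine ⟨fun x hx => hx, fun x y hx hy h => h, ?_, ?_⟩
      · intro x y hx hy
        exact krel_refl A hAT (isOPPair_kadd A hx hy)
      · intro p hp
        rw [mmapOPE_id]
        exact krel_refl A hAT ⟨hp, isOPE_zero A⟩
    exact krel_det A A hAT hAT LinearMap.id hidOPE F' (fun x => x) hF' hIdProp x hx
  · -- composition
    intro ψ hψstar hψ hφeq hψeq Fφ Fψ Fc hFφ hFψ hFc x hx
    have hψe : Cu.IsOP 1 (mmap ψ (B.eN 1)) := by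
      have he : mmap ψ (B.eN 1) = Cu.eN 1 := by
        show mmap ψ (diagE B.e 1) = diagE Cu.e 1
        rw [mmap_diagE, hψeq]
      rw [he]
      exact op_eN Cu 1
    have hψOPE : ∀ p : OPE W, B.IsOPE p → Cu.IsOPE (mmapOPE ψ p) :=
      fun p hp => op_mmapOPE B Cu ψ hψstar hψ hψe hp
    have hcOPE : ∀ p : OPE V, A.IsOPE p → Cu.IsOPE (mmapOPE (ψ ∘ₗ φ) p) := by
      intro p hp
      rw [mmapOPE_comp]
      exact hψOPE _ (hφOPE _ hp)
    have hcomp : K0HomProp A Cu (ψ ∘ₗ φ) (fun x => Fψ (Fφ x)) := by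
      refine ⟨?_, ?_, ?_, ?_⟩
      · intro x hx
        exact hFψ.1 _ (hFφ.1 _ hx)
      · intro x y hx hy h
        exact hFψ.2.1 _ _ (hFφ.1 _ hx) (hFφ.1 _ hy) (hFφ.2.1 _ _ hx hy h)
      · intro x y hx hy
        have h1 := hFφ.2.2.1 x y hx hy
        have hBsum : B.IsOPPair (AMOUS.kadd (Fφ x) (Fφ y)) :=
          isOPPair_kadd B (hFφ.1 _ hx) (hFφ.1 _ hy)
        have h2 := hFψ.2.1 _ _ (hFφ.1 _ (isOPPair_kadd A hx hy)) hBsum h1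
        have h3 := hFψ.2.2.1 (Fφ x) (Fφ y) (hFφ.1 _ hx) (hFφ.1 _ hy)
        exact krel_trans Cu hUT (hFψ.1 _ (hFφ.1 _ (isOPPair_kadd A hx hy)))
          (hFψ.1 _ hBsum)
          (isOPPair_kadd Cu (hFψ.1 _ (hFφ.1 _ hx)) (hFψ.1 _ (hFφ.1 _ hy))) h2 h3
      · intro p hp
        have h1 := hFφ.2.2.2 p hp
        have hB1 : B.IsOPPair (Fφ (p, OPE.zero V)) := hFφ.1 _ ⟨hp, isOPE_zero A⟩
        have hB2 : B.IsOPPair (mmapOPE φ p, OPE.zero W) := ⟨hφOPE p hp, isOPE_zero B⟩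
        have h2 := hFψ.2.1 _ _ hB1 hB2 h1
        have h3 := hFψ.2.2.2 (mmapOPE φ p) (hφOPE p hp)
        have he : (mmapOPE ψ (mmapOPE φ p), OPE.zero U)
            = (mmapOPE (ψ ∘ₗ φ) p, OPE.zero U) := by
          rw [mmapOPE_comp]
        rw [he] at h3
        exact krel_trans Cu hUT (hFψ.1 _ hB1) (hFψ.1 _ hB2)
          ⟨hcOPE p hp, isOPE_zero Cu⟩ h2 h3
    exact krel_det A Cu hAT hUT (ψ ∘ₗ φ) hcOPE Fc (fun x => Fψ (Fφ x)) hFc hcomp x hx
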